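/- arXiv:0901.4687 — 13 statements merged into one kernel-verified Lean document; each statement's English description precedes it below -/
import Mathlib

section
/- Let A be a commutative semilocal ring (a ring with only finitely many maximal ideals), and let B ⊆ A be a subring that is a local ring whose maximal ideal 𝔪 is contained in the Jacobson radical of A, and suppose the residue field B/𝔪 is infinite. Let M be a finite free A-module and N ⊆ M a B-submodule such that the A-span of N equals M. Then N contains an A-module basis of M. -/
open Submodule

set_option maxHeartbeats 1000000
set_option synthInstance.maxHeartbeats 400000

section Aux
variable {A M : Type*} [CommRing A] [AddCommGroup M] [Module A M]

lemma aux_mem_smul_top_iff_repr {n : ℕ} (e : Module.Basis (Fin n) A M) (I : Ideal A) (x : M) :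
    x ∈ (I • ⊤ : Submodule A M) ↔ ∀ i, e.repr x i ∈ I := by
  conv_lhs => rw [← e.span_eq]
  rw [Submodule.mem_ideal_smul_span_iff_exists_sum]
  constructor
  · rintro ⟨a, ha, rfl⟩ i
    classical
    rw [map_finsuppSum]
    simp only [map_smul, Module.Basis.repr_self]
    rw [Finsupp.sum_apply]
    simp only [Finsupp.smul_single, smul_eq_mul, mul_one]
    rw [Finsupp.sum]
    apply Ideal.sum_mem
    intro j _
    rw [Finsupp.single_apply]
    split_ifs with h
    · subst h; exact ha j
    · exact I.zero_mem
  · intro h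
    refine ⟨e.repr x, h, ?_⟩
    have := e.linearCombination_repr x
    rwa [Finsupp.linearCombination_apply] at this

lemma aux_mk_sum {ι : Type*} (s : Finset ι) (p : Submodule A M) (f : ι → M) :
    Submodule.Quotient.mk (p := p) (∑ i ∈ s, f i)
      = ∑ i ∈ s, Submodule.Quotient.mk (p := p) (f i) :=
  map_sum p.mkQ f s

lemma aux_mk_smul_mk (I : Ideal A) (a : A) (x : M) :
    (Ideal.Quotient.mk I a) • (Submodule.Quotient.mk (p := (I • ⊤ : Submodule A M)) x)
      = Submodule.Quotient.mk (p := (I • ⊤ : Submodule A M)) (a • x) :=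
  Module.Quotient.mk_smul_mk M I a x

noncomputable def auxQuotBasis {n : ℕ} (e : Module.Basis (Fin n) A M) (I : Ideal A) :
    Module.Basis (Fin n) (A ⧸ I) (M ⧸ (I • ⊤ : Submodule A M)) := by
  classical
  refine Module.Basis.mk (v := fun i => Submodule.Quotient.mk (e i)) ?_ ?_
  · rw [Fintype.linearIndependent_iff]
    intro g hg
    choose a ha using fun i => Ideal.Quotient.mk_surjective (g i)
    have h0 : Submodule.Quotient.mk (p := (I • ⊤ : Submodule A M)) (∑ i, a i • e i) = 0 := by
      rw [aux_mk_sum]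
      rw [← hg]
      congr 1
      ext i
      rw [← ha i, aux_mk_smul_mk]
    rw [Submodule.Quotient.mk_eq_zero] at h0
    rw [aux_mem_smul_top_iff_repr e I] at h0
    intro i
    have := h0 i
    rw [Module.Basis.repr_sum_self] at this
    rw [← ha i, Ideal.Quotient.eq_zero_iff_mem]
    exact this
  · rintro x -
    obtain ⟨x, rfl⟩ := Submodule.Quotient.mk_surjective _ x
    rw [Finsupp.mem_span_range_iff_exists_finsupp]
    refine ⟨(e.repr x).mapRange (Ideal.Quotient.mk I) (map_zero _), ?_⟩
    rw [Finsupp.sum_mapRange_index (by simp)]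
    have hx := e.linearCombination_repr x
    rw [Finsupp.linearCombination_apply] at hx
    conv_rhs => rw [← hx]
    rw [Finsupp.sum, Finsupp.sum, aux_mk_sum]
    apply Finset.sum_congr rfl
    intro i _
    rw [aux_mk_smul_mk]

@[simp] lemma auxQuotBasis_apply {n : ℕ} (e : Module.Basis (Fin n) A M) (I : Ideal A) (i : Fin n) :
    auxQuotBasis e I i = Submodule.Quotient.mk (e i) := by
  simp [auxQuotBasis]

end Aux

open Submodule

lemma aux_eq_top_of_forall_maximal {A M : Type*} [CommRing A] [AddCommGroup M] [Module A M]
    [Module.Finite A M] (P : Submodule A M)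
    (h : ∀ m : Ideal A, m.IsMaximal → P ⊔ (m • ⊤ : Submodule A M) = ⊤) : P = ⊤ := by
  by_contra hP
  have hnt : Nontrivial (M ⧸ P) :=
    Submodule.Quotient.nontrivial_iff.mpr hP
  have hann : Module.annihilator A (M ⧸ P) ≠ ⊤ := by
    intro ht
    have h1 : (1 : A) ∈ Module.annihilator A (M ⧸ P) := ht ▸ trivial
    rw [Module.mem_annihilator] at h1
    obtain ⟨x, y, hxy⟩ := hnt
    exact hxy (by rw [← one_smul A x, ← one_smul A y, h1, h1])
  obtain ⟨m, hmax, hle⟩ := Ideal.exists_le_maximal _ hann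
  have htop : (⊤ : Submodule A (M ⧸ P)) ≤ m • ⊤ := by
    have h2 : Submodule.map P.mkQ P = ⊥ := by
      rw [eq_bot_iff]
      rintro x ⟨y, hy, rfl⟩
      simpa [Submodule.Quotient.mk_eq_zero] using hy
    have := congrArg (Submodule.map P.mkQ) (h m hmax)
    rw [Submodule.map_sup, Submodule.map_smul'', Submodule.map_top, Submodule.range_mkQ,
      h2, bot_sup_eq] at this
    rw [this]
  obtain ⟨r, hr1, hr0⟩ :=
    Submodule.exists_sub_one_mem_and_smul_eq_zero_of_fg_of_le_smul m ⊤ Module.Finite.fg_top htop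
  have hrann : r ∈ Module.annihilator A (M ⧸ P) := by
    rw [Module.mem_annihilator]
    intro q; exact hr0 q trivial
  have : (1 : A) ∈ m := by
    have := m.sub_mem (hle hrann) hr1
    simpa using this
  exact hmax.ne_top ((Ideal.eq_top_iff_one m).mpr this)

lemma aux_step {A M : Type*} [CommRing A] [AddCommGroup M] [Module A M]
    (hsemilocal : {I : Ideal A | I.IsMaximal}.Finite)
    (B : Subring A) [IsLocalRing B]
    (hm : ∀ x : B, x ∈ IsLocalRing.maximalIdeal B → (x : A) ∈ Ideal.jacobson (⊥ : Ideal A))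
    (hres : Infinite (IsLocalRing.ResidueField B))
    (N : Submodule B M) (hN : Submodule.span A (N : Set M) = ⊤)
    {k : ℕ} (v : Fin k → M)
    (hv : ∀ (m : Ideal A), m.IsMaximal →
      Submodule.span (A ⧸ m) (Set.range fun i =>
        Submodule.Quotient.mk (p := (m • ⊤ : Submodule A M)) (v i)) ≠ ⊤) :
    ∃ x ∈ N, ∀ (m : Ideal A), m.IsMaximal →
      Submodule.Quotient.mk (p := (m • ⊤ : Submodule A M)) x ∉
        Submodule.span (A ⧸ m) (Set.range fun i =>
          Submodule.Quotient.mk (p := (m • ⊤ : Submodule A M)) (v i)) := by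
  classical
  set 𝔪 := IsLocalRing.maximalIdeal B with h𝔪
  letI : Field (B ⧸ 𝔪) := Ideal.Quotient.field 𝔪
  haveI : Infinite (B ⧸ 𝔪) := hres
  -- the target space
  set V := (↥N ⧸ (𝔪 • ⊤ : Submodule B ↥N)) with hV
  letI : Module (B ⧸ 𝔪) V := inferInstance
  -- the bad submodules
  let W : Ideal A → Submodule A M := fun m =>
    Submodule.comap (Submodule.mkQ (m • ⊤ : Submodule A M))
      ((Submodule.span (A ⧸ m) (Set.range fun i =>
        Submodule.Quotient.mk (p := (m • ⊤ : Submodule A M)) (v i))).restrictScalars A)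
  let T : Ideal A → Submodule B ↥N := fun m =>
    Submodule.comap N.subtype ((W m).restrictScalars B)
  let U : Ideal A → Submodule (B ⧸ 𝔪) V := fun m =>
    Submodule.span (B ⧸ 𝔪)
      (((T m).map (Submodule.mkQ (𝔪 • ⊤ : Submodule B ↥N)) : Submodule B V) : Set V)
  -- 𝔪 • ⊤ ≤ T m for each maximal m
  have hsub : ∀ m : Ideal A, m.IsMaximal → (𝔪 • ⊤ : Submodule B ↥N) ≤ T m := by
    intro m hmax
    rw [Submodule.smul_le]
    rintro b hb y -
    have hbm : (b : A) ∈ m := by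
      have := hm b hb
      rw [Ideal.jacobson] at this
      exact Submodule.mem_sInf.mp this m ⟨bot_le, hmax⟩
    simp only [T, W, Submodule.mem_comap, Submodule.coe_subtype,
      Submodule.restrictScalars_mem, Submodule.mkQ_apply]
    have hcoe : ((b • y : ↥N) : M) = (b : A) • (y : M) := rfl
    have hmem : ((b : A) • (y : M)) ∈ (m • ⊤ : Submodule A M) :=
      Submodule.smul_mem_smul hbm Submodule.mem_top
    rw [hcoe, (Submodule.Quotient.mk_eq_zero _).mpr hmem]
    exact Submodule.zero_mem _
  -- T m is a proper submodule
  have hTne : ∀ m : Ideal A, m.IsMaximal → T m ≠ ⊤ := by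
    intro m hmax hT
    apply hv m hmax
    have hWtop : (⊤ : Submodule A M) ≤ W m := by
      rw [← hN, Submodule.span_le]
      intro x hx
      have : (⟨x, hx⟩ : ↥N) ∈ T m := hT ▸ Submodule.mem_top
      simpa only [T, Submodule.mem_comap, Submodule.coe_subtype,
        Submodule.restrictScalars_mem, SetLike.mem_coe] using this
    rw [← Submodule.restrictScalars_eq_top_iff (S := A)]
    rw [eq_top_iff]
    rintro z -
    obtain ⟨x, rfl⟩ := Submodule.Quotient.mk_surjective _ z
    have := hWtop (Submodule.mem_top (x := x))
    simpa only [W, Submodule.mem_comap, Submodule.restrictScalars_mem,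
      Submodule.mkQ_apply] using this
  -- U m is proper
  have halg : Function.Surjective (algebraMap B (B ⧸ 𝔪)) := by
    rw [Ideal.Quotient.algebraMap_eq]
    exact Ideal.Quotient.mk_surjective
  have hUrs : ∀ m : Ideal A,
      (U m).restrictScalars B = (T m).map (Submodule.mkQ (𝔪 • ⊤ : Submodule B ↥N)) := by
    intro m
    rw [Submodule.restrictScalars_span B (B ⧸ 𝔪) halg, Submodule.span_eq]
  have hUne : ∀ m : Ideal A, m.IsMaximal → U m ≠ ⊤ := by
    intro m hmax hU
    apply hTne m hmax
    have h1 : (T m).map (Submodule.mkQ (𝔪 • ⊤ : Submodule B ↥N)) = ⊤ := by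
      rw [← hUrs m, hU]
      rfl
    rw [Submodule.map_mkQ_eq_top] at h1
    rwa [sup_eq_right.mpr (hsub m hmax)] at h1
  -- avoid all U m
  haveI : Finite {I : Ideal A | I.IsMaximal} := hsemilocal.to_subtype
  have hexists : ∃ xb : V, ∀ m : {I : Ideal A | I.IsMaximal}, xb ∉ U m := by
    by_contra hc
    push_neg at hc
    have hcover : ⋃ (m : {I : Ideal A | I.IsMaximal}), ((U m : Submodule (B ⧸ 𝔪) V) : Set V)
        = Set.univ := by
      ext xb
      simp only [Set.mem_iUnion, Set.mem_univ, iff_true, SetLike.mem_coe]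
      exact hc xb
    obtain ⟨m, hmtop⟩ := Subspace.exists_eq_top_of_iUnion_eq_univ hcover
    exact hUne m m.2 hmtop
  obtain ⟨xb, hxb⟩ := hexists
  obtain ⟨y, rfl⟩ := Submodule.Quotient.mk_surjective _ xb
  refine ⟨(y : M), y.2, ?_⟩
  intro m hmax hmem
  apply hxb ⟨m, hmax⟩
  have hyT : y ∈ T m := by
    simp only [T, W, Submodule.mem_comap, Submodule.coe_subtype,
      Submodule.restrictScalars_mem, Submodule.mkQ_apply]
    exact hmem
  exact Submodule.subset_span ⟨y, hyT, rfl⟩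


/-- Let `A` be a commutative semilocal ring (only finitely many maximal
ideals), `B ⊆ A` a subring which is a local ring whose maximal ideal is contained in the
Jacobson radical of `A` and whose residue field is infinite.  Let `M` be a finite free
`A`-module and `N ⊆ M` a `B`-submodule whose `A`-span is all of `M`.  Then `N` contains
an `A`-module basis of `M`. -/
theorem submodule_spanning_contains_basis
    {A M : Type*} [CommRing A] [AddCommGroup M] [Module A M]
    (hsemilocal : {I : Ideal A | I.IsMaximal}.Finite)
    (B : Subring A) [IsLocalRing B]
    (hm : ∀ x : B, x ∈ IsLocalRing.maximalIdeal B →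
      (x : A) ∈ Ideal.jacobson (⊥ : Ideal A))
    (hres : Infinite (IsLocalRing.ResidueField B))
    {n : ℕ} (e : Module.Basis (Fin n) A M)
    (N : Submodule B M) (hN : Submodule.span A (N : Set M) = ⊤) :
    ∃ b : Module.Basis (Fin n) A M, ∀ i, b i ∈ N := by
  classical
  rcases subsingleton_or_nontrivial A with hA | hA
  · haveI : Subsingleton M := Module.subsingleton A M
    exact ⟨e, fun i => by rw [Subsingleton.elim (e i) (0 : M)]; exact N.zero_mem⟩
  haveI : Module.Finite A M := Module.Finite.of_basis e
  have hfr : ∀ (m : Ideal A), m.IsMaximal →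
      Module.finrank (A ⧸ m) (M ⧸ (m • ⊤ : Submodule A M)) = n := by
    intro m hmax
    letI := hmax
    rw [Module.finrank_eq_card_basis (auxQuotBasis e m), Fintype.card_fin]
  have key : ∀ k : ℕ, k ≤ n → ∃ v : Fin k → M, (∀ i, v i ∈ N) ∧
      ∀ (m : Ideal A), m.IsMaximal →
        LinearIndependent (A ⧸ m)
          (fun i => Submodule.Quotient.mk (p := (m • ⊤ : Submodule A M)) (v i)) := by
    intro k
    induction k with
    | zero =>
      intro _
      exact ⟨Fin.elim0, fun i => i.elim0, fun m hmax => linearIndependent_empty_type⟩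
    | succ k ih =>
      intro hk1
      obtain ⟨v, hvN, hind⟩ := ih (Nat.le_of_succ_le hk1)
      have hklt : k < n := hk1
      have hv : ∀ (m : Ideal A), m.IsMaximal →
          Submodule.span (A ⧸ m) (Set.range fun i =>
            Submodule.Quotient.mk (p := (m • ⊤ : Submodule A M)) (v i)) ≠ ⊤ := by
        intro m hmax htop
        letI := hmax
        letI : Field (A ⧸ m) := Ideal.Quotient.field m
        have h1 := finrank_le_of_span_eq_top htop
        rw [hfr m hmax, Fintype.card_fin] at h1
        omega
      obtain ⟨x, hxN, hx⟩ := aux_step hsemilocal B hm hres N hN v hv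
      refine ⟨Fin.snoc v x, ?_, ?_⟩
      · intro i
        refine Fin.lastCases ?_ ?_ i
        · rw [Fin.snoc_last]; exact hxN
        · intro j; rw [Fin.snoc_castSucc]; exact hvN j
      · intro m hmax
        letI := hmax
        letI : Field (A ⧸ m) := Ideal.Quotient.field m
        show LinearIndependent (A ⧸ m)
          ((fun z => Submodule.Quotient.mk (p := (m • ⊤ : Submodule A M)) z) ∘ Fin.snoc v x)
        rw [Fin.comp_snoc, linearIndependent_fin_snoc]
        exact ⟨hind m hmax, hx m hmax⟩
  obtain ⟨v, hvN, hind⟩ := key n le_rfl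
  have hspan_m : ∀ (m : Ideal A), m.IsMaximal →
      Submodule.span A (Set.range v) ⊔ (m • ⊤ : Submodule A M) = ⊤ := by
    intro m hmax
    letI := hmax
    letI : Field (A ⧸ m) := Ideal.Quotient.field m
    haveI : Module.Finite (A ⧸ m) (M ⧸ (m • ⊤ : Submodule A M)) :=
      Module.Finite.of_basis (auxQuotBasis e m)
    have hsp : Submodule.span (A ⧸ m) (Set.range fun i =>
        Submodule.Quotient.mk (p := (m • ⊤ : Submodule A M)) (v i)) = ⊤ :=
      (hind m hmax).span_eq_top_of_card_eq_finrank'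
        (by rw [Fintype.card_fin, hfr m hmax])
    have h3 : Submodule.span A (Set.range fun i =>
        Submodule.Quotient.mk (p := (m • ⊤ : Submodule A M)) (v i)) = ⊤ := by
      have h2 := Submodule.restrictScalars_span A (A ⧸ m) Ideal.Quotient.mk_surjective
        (Set.range fun i =>
          Submodule.Quotient.mk (p := (m • ⊤ : Submodule A M)) (v i))
      rw [hsp] at h2
      rw [← h2]
      rfl
    have h4 : Submodule.map (Submodule.mkQ (m • ⊤ : Submodule A M))
        (Submodule.span A (Set.range v)) = ⊤ := by
      rw [Submodule.map_span, ← Set.range_comp]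
      exact h3
    rw [Submodule.map_mkQ_eq_top] at h4
    rw [sup_comm] at h4
    exact h4
  have hspan : Submodule.span A (Set.range v) = ⊤ :=
    aux_eq_top_of_forall_maximal _ hspan_m
  let φ : (Fin n →₀ A) →ₗ[A] M := Finsupp.linearCombination A v
  have hφsur : Function.Surjective φ := by
    rw [← LinearMap.range_eq_top, Finsupp.range_linearCombination, hspan]
  let ψ : (Fin n → A) →ₗ[A] M :=
    φ ∘ₗ (Finsupp.linearEquivFunOnFinite A A (Fin n)).symm.toLinearMap
  have hψsur : Function.Surjective ψ := hφsur.comp (LinearEquiv.surjective _)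
  let f : M →ₗ[A] M := ψ ∘ₗ (e.equivFun : M ≃ₗ[A] (Fin n → A)).toLinearMap
  have hfsur : Function.Surjective f := hψsur.comp (LinearEquiv.surjective _)
  have hfinj : Function.Injective f :=
    OrzechProperty.injective_of_surjective_endomorphism f hfsur
  have hψinj : Function.Injective ψ := by
    intro a b hab
    have h5 : f (e.equivFun.symm a) = f (e.equivFun.symm b) := by
      simp only [f, LinearMap.coe_comp, Function.comp_apply, LinearEquiv.coe_coe,
        LinearEquiv.apply_symm_apply]
      exact hab
    have h6 := hfinj h5
    exact e.equivFun.symm.injective h6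
  let eqv : (Fin n → A) ≃ₗ[A] M := LinearEquiv.ofBijective ψ ⟨hψinj, hψsur⟩
  refine ⟨(Pi.basisFun A (Fin n)).map eqv, ?_⟩
  intro i
  have h7 : (Pi.basisFun A (Fin n)).map eqv i = ψ (Pi.single i 1) := by
    simp [Module.Basis.map_apply, Pi.basisFun_apply, eqv, LinearEquiv.ofBijective_apply]
    rfl
  have h8 : ψ (Pi.single i 1) = v i := by
    simp [ψ, φ]
  rw [h7, h8]
  exact hvN i
end

section
/- Let A be a commutative ring and u : M → N a homomorphism of A-modules with N finitely generated. Then u is surjective if and only if for every maximal ideal 𝔪 of A the induced homomorphism M/𝔪M → N/𝔪N is surjective. -/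
/-- Let `A` be a commutative ring and `u : M → N` a homomorphism of
`A`-modules with `N` finitely generated.  Then `u` is surjective iff for every maximal
ideal `𝔪` of `A` the induced homomorphism `M ⧸ 𝔪M → N ⧸ 𝔪N` is surjective. -/
theorem surjective_iff_surjective_mod_maximal
    {A M N : Type*} [CommRing A] [AddCommGroup M] [Module A M]
    [AddCommGroup N] [Module A N] [Module.Finite A N] (u : M →ₗ[A] N) :
    Function.Surjective u ↔
      ∀ 𝔪 : Ideal A, 𝔪.IsMaximal →
        Function.Surjective
          (Submodule.mapQ (𝔪 • ⊤ : Submodule A M) (𝔪 • ⊤ : Submodule A N) u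
            (by
              rw [Submodule.smul_le]
              intro r hr x _
              rw [Submodule.mem_comap, map_smul]
              exact Submodule.smul_mem_smul hr Submodule.mem_top)) := by
  constructor
  · intro hu 𝔪 _
    intro y
    obtain ⟨n, rfl⟩ := Submodule.mkQ_surjective _ y
    obtain ⟨m, rfl⟩ := hu n
    exact ⟨Submodule.mkQ _ m, by simp [Submodule.mapQ_apply]⟩
  · intro h
    -- translate the hypothesis into a statement about submodules
    have key : ∀ 𝔪 : Ideal A, 𝔪.IsMaximal →
        LinearMap.range u ⊔ (𝔪 • ⊤ : Submodule A N) = ⊤ := by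
      intro 𝔪 h𝔪
      rw [sup_comm, ← Submodule.map_mkQ_eq_top, ← LinearMap.range_comp,
        LinearMap.range_eq_top]
      intro y
      obtain ⟨x, hx⟩ := h 𝔪 h𝔪 y
      obtain ⟨m, rfl⟩ := Submodule.mkQ_surjective _ x
      simp only [Submodule.mkQ_apply, Submodule.mapQ_apply] at hx
      exact ⟨m, hx⟩
    -- pass to the quotient Q := N ⧸ range u
    set P := LinearMap.range u with hP
    suffices hPt : P = ⊤ by
      rw [← LinearMap.range_eq_top]; exact hPt
    by_contra hne
    have hQ : ∀ 𝔪 : Ideal A, 𝔪.IsMaximal →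
        (⊤ : Submodule A (N ⧸ P)) ≤ 𝔪 • (⊤ : Submodule A (N ⧸ P)) := by
      intro 𝔪 h𝔪
      have := congrArg (Submodule.map P.mkQ) (key 𝔪 h𝔪)
      rw [Submodule.map_sup, Submodule.map_smul'', Submodule.map_top,
        Submodule.range_mkQ, Submodule.mkQ_map_self, bot_sup_eq] at this
      rw [this]
    -- the annihilator of Q is proper
    have hQne : (⊤ : Submodule A (N ⧸ P)).annihilator ≠ ⊤ := by
      intro htop
      rw [Submodule.annihilator_eq_top_iff] at htop
      apply hne
      rw [eq_top_iff]
      intro n _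
      have hn : P.mkQ n ∈ (⊥ : Submodule A (N ⧸ P)) := htop ▸ Submodule.mem_top
      rw [Submodule.mem_bot] at hn
      exact (Submodule.Quotient.mk_eq_zero P).mp hn
    obtain ⟨𝔪, h𝔪, hle⟩ := Ideal.exists_le_maximal _ hQne
    obtain ⟨r, hr1, hr0⟩ :=
      Submodule.exists_sub_one_mem_and_smul_eq_zero_of_fg_of_le_smul 𝔪
        (⊤ : Submodule A (N ⧸ P)) (Module.Finite.fg_top) (hQ 𝔪 h𝔪)
    have hrann : r ∈ (⊤ : Submodule A (N ⧸ P)).annihilator :=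
      Submodule.mem_annihilator.mpr fun q hq => hr0 q hq
    have : (1 : A) ∈ 𝔪 := by
      have := 𝔪.sub_mem (hle hrann) hr1
      simpa using this
    exact h𝔪.ne_top (Ideal.eq_top_of_isUnit_mem _ this isUnit_one)
end

section
/- Let A be a commutative superalgebra. Then the two-sided ideal of A generated by the odd part 𝒜 1 is a nil ideal: every element of the ideal A·𝒜 1·A is nilpotent. -/
/-- Let `A` be a commutative superalgebra, i.e. a `ZMod 2`-graded ring
which is supercommutative (`a * b = (-1)^(i*j) • (b * a)` for homogeneous elements, and
odd elements square to zero).  Then the two-sided ideal of `A` generated by the odd part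
`𝒜 1` is a nil ideal: every element of it is nilpotent. -/
theorem twoSidedIdeal_span_odd_part_isNil
    {A : Type*} [Ring A] (𝒜 : ZMod 2 → AddSubgroup A) [GradedRing 𝒜]
    (hsuper : ∀ (i j : ZMod 2), ∀ a ∈ 𝒜 i, ∀ b ∈ 𝒜 j,
      a * b = ((-1 : ℤ) ^ ((i * j).val)) • (b * a))
    (hodd : ∀ a ∈ 𝒜 1, a * a = 0) :
    ∀ x ∈ TwoSidedIdeal.span ((𝒜 1 : AddSubgroup A) : Set A), IsNilpotent x := by
  -- graded multiplication facts
  have h11 : ∀ u ∈ 𝒜 1, ∀ v ∈ 𝒜 1, u * v ∈ 𝒜 0 := by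
    intro u hu v hv
    have := SetLike.mul_mem_graded hu hv
    rwa [show (1 + 1 : ZMod 2) = 0 from by decide] at this
  have h01 : ∀ u ∈ 𝒜 0, ∀ v ∈ 𝒜 1, u * v ∈ 𝒜 1 := by
    intro u hu v hv
    have := SetLike.mul_mem_graded hu hv
    rwa [show (0 + 1 : ZMod 2) = 1 from by decide] at this
  have h10 : ∀ u ∈ 𝒜 1, ∀ v ∈ 𝒜 0, u * v ∈ 𝒜 1 := by
    intro u hu v hv
    have := SetLike.mul_mem_graded hu hv
    rwa [show (1 + 0 : ZMod 2) = 1 from by decide] at this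
  -- even elements are central
  have hcentral : ∀ c ∈ 𝒜 0, ∀ b : A, c * b = b * c := by
    intro c hc b
    induction b using DirectSum.Decomposition.inductionOn 𝒜 with
    | zero => simp
    | homogeneous m =>
      rename_i j
      simpa using hsuper 0 j c hc m m.2
    | add m m' hm hm' => rw [mul_add, add_mul, hm, hm']
  -- odd elements anticommute
  have hanti : ∀ u ∈ 𝒜 1, ∀ v ∈ 𝒜 1, v * u = -(u * v) := by
    intro u hu v hv
    have h := hsuper 1 1 u hu v hv
    rw [show ((1 * 1 : ZMod 2)).val = 1 from by decide] at h
    simp only [pow_one, neg_smul, one_smul] at h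
    rw [h, neg_neg]
  -- the additive subgroup generated by products of two odd elements
  set G : Set A := {x | ∃ u ∈ 𝒜 1, ∃ v ∈ 𝒜 1, x = u * v} with hG
  set E : AddSubgroup A := AddSubgroup.closure G with hE
  have hGsub : G ⊆ (𝒜 0 : Set A) := by
    rintro x ⟨u, hu, v, hv, rfl⟩
    exact h11 u hu v hv
  have hE0 : ∀ c ∈ E, c ∈ 𝒜 0 := fun c hc =>
    AddSubgroup.closure_le (𝒜 0) |>.mpr hGsub hc
  -- elements of E are nilpotent
  have hEnil : ∀ c ∈ E, IsNilpotent c := by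
    intro c hc
    induction hc using AddSubgroup.closure_induction with
    | mem x hx =>
      obtain ⟨u, hu, v, hv, rfl⟩ := hx
      refine ⟨2, ?_⟩
      have e1 : u * v * (u * v) = u * (v * u) * v := by noncomm_ring
      rw [sq, e1, hanti u hu v hv,
        show u * -(u * v) * v = -(u * u * (v * v)) from by noncomm_ring, hodd u hu]
      simp
    | zero => exact ⟨1, by simp⟩
    | add x y hx hy ihx ihy =>
      exact Commute.isNilpotent_add (hcentral x (hE0 x hx) y) ihx ihy
    | neg x hx ih => exact ih.neg
  -- E is stable under multiplication by even elements
  have hEmulL : ∀ a ∈ 𝒜 0, ∀ c ∈ E, a * c ∈ E := by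
    intro a ha c hc
    induction hc using AddSubgroup.closure_induction with
    | mem x hx =>
      obtain ⟨u, hu, v, hv, rfl⟩ := hx
      refine AddSubgroup.subset_closure ⟨a * u, h01 a ha u hu, v, hv, ?_⟩
      noncomm_ring
    | zero => simpa using zero_mem E
    | add p q hp hq ihp ihq => rw [mul_add]; exact add_mem ihp ihq
    | neg p hp ihp => rw [mul_neg]; exact neg_mem ihp
  have hEmulR : ∀ a ∈ 𝒜 0, ∀ c ∈ E, c * a ∈ E := by
    intro a ha c hc
    induction hc using AddSubgroup.closure_induction with
    | mem x hx =>
      obtain ⟨u, hu, v, hv, rfl⟩ := hx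
      refine AddSubgroup.subset_closure ⟨u, hu, v * a, h10 v hv a ha, ?_⟩
      noncomm_ring
    | zero => simpa using zero_mem E
    | add p q hp hq ihp ihq => rw [add_mul]; exact add_mem ihp ihq
    | neg p hp ihp => rw [neg_mul]; exact neg_mem ihp
  -- the candidate ideal carrier
  set S : Set A := {x | ∃ c ∈ E, ∃ y ∈ 𝒜 1, x = c + y} with hS
  have hmul1 : ∀ i : ZMod 2, ∀ a ∈ 𝒜 i, ∀ x ∈ S, a * x ∈ S := by
    rintro i a ha x ⟨c, hc, y, hy, rfl⟩
    fin_cases i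
    · exact ⟨a * c, hEmulL a ha c hc, a * y, h01 a ha y hy, by rw [mul_add]⟩
    · exact ⟨a * y, AddSubgroup.subset_closure ⟨a, ha, y, hy, rfl⟩,
        a * c, h10 a ha c (hE0 c hc), by rw [mul_add, add_comm]⟩
  have hmul2 : ∀ i : ZMod 2, ∀ a ∈ 𝒜 i, ∀ x ∈ S, x * a ∈ S := by
    rintro i a ha x ⟨c, hc, y, hy, rfl⟩
    fin_cases i
    · exact ⟨c * a, hEmulR a ha c hc, y * a, h10 y hy a ha, by rw [add_mul]⟩
    · exact ⟨y * a, AddSubgroup.subset_closure ⟨y, hy, a, ha, rfl⟩,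
        c * a, h01 c (hE0 c hc) a ha, by rw [add_mul, add_comm]⟩
  have hSzero : (0 : A) ∈ S := ⟨0, zero_mem E, 0, zero_mem (𝒜 1), by simp⟩
  have hSadd : ∀ {x y : A}, x ∈ S → y ∈ S → x + y ∈ S := by
    rintro x y ⟨c, hc, u, hu, rfl⟩ ⟨c', hc', u', hu', rfl⟩
    exact ⟨c + c', add_mem hc hc', u + u', add_mem hu hu', by abel⟩
  have hSneg : ∀ {x : A}, x ∈ S → -x ∈ S := by
    rintro x ⟨c, hc, u, hu, rfl⟩
    exact ⟨-c, neg_mem hc, -u, neg_mem hu, by abel⟩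
  have hSmulL : ∀ {x y : A}, y ∈ S → x * y ∈ S := by
    intro x y hy
    induction x using DirectSum.Decomposition.inductionOn 𝒜 with
    | zero => rw [zero_mul]; exact hSzero
    | homogeneous m =>
      rename_i i
      exact hmul1 i m m.2 _ hy
    | add m m' hm hm' => rw [add_mul]; exact hSadd hm hm'
  have hSmulR : ∀ {x y : A}, x ∈ S → x * y ∈ S := by
    intro x y hx
    induction y using DirectSum.Decomposition.inductionOn 𝒜 with
    | zero => rw [mul_zero]; exact hSzero
    | homogeneous m =>
      rename_i i
      exact hmul2 i m m.2 _ hx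
    | add m m' hm hm' => rw [mul_add]; exact hSadd hm hm'
  set I : TwoSidedIdeal A := TwoSidedIdeal.mk' S hSzero hSadd hSneg hSmulL hSmulR with hI
  intro x hx
  have hxS : x ∈ S := by
    have := TwoSidedIdeal.mem_span_iff.mp hx I (by
      intro y hy
      simp only [hI, TwoSidedIdeal.coe_mk']
      exact ⟨0, zero_mem E, y, hy, by simp⟩)
    rwa [hI, TwoSidedIdeal.mem_mk'] at this
  obtain ⟨c, hc, y, hy, rfl⟩ := hxS
  have hynil : IsNilpotent y := ⟨2, by rw [sq]; exact hodd y hy⟩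
  exact Commute.isNilpotent_add (hcentral c (hE0 c hc) y) (hEnil c hc) hynil
end

section
/- Let A be a commutative superalgebra. Then every maximal left ideal 𝔐 of A is a two-sided ideal, contains the whole odd part 𝒜 1, and satisfies 𝔐 = (𝔐 ∩ 𝒜 0) ⊕ 𝒜 1, where 𝔐 ∩ 𝒜 0 is a maximal ideal of the commutative ring 𝒜 0. -/
/-- Let `A` be a commutative superalgebra (a supercommutative
`ZMod 2`-graded ring).  Every maximal left ideal `𝔐` of `A` (a coatom among left ideals,
i.e. submodules of `A` over itself) is a two-sided ideal, contains the whole odd part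
`𝒜 1`, satisfies `𝔐 = (𝔐 ∩ 𝒜 0) ⊕ 𝒜 1`, and `𝔐 ∩ 𝒜 0` is a maximal ideal of the
commutative ring `𝒜 0`. -/
theorem maximal_left_ideal_of_superalgebra
    {A : Type*} [Ring A] (𝒜 : ZMod 2 → AddSubgroup A) [GradedRing 𝒜]
    (hsuper : ∀ (i j : ZMod 2), ∀ a ∈ 𝒜 i, ∀ b ∈ 𝒜 j,
      a * b = ((-1 : ℤ) ^ ((i * j).val)) • (b * a))
    (hodd : ∀ a ∈ 𝒜 1, a * a = 0)
    (𝔐 : Submodule A A) (hmax : IsCoatom 𝔐) :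
    (∀ x ∈ 𝔐, ∀ a : A, x * a ∈ 𝔐) ∧
    (∀ a ∈ 𝒜 1, a ∈ 𝔐) ∧
    (∀ x : A, x ∈ 𝔐 ↔ ∃ y ∈ 𝒜 0, y ∈ 𝔐 ∧ ∃ z ∈ 𝒜 1, x = y + z) ∧
    (Ideal.IsMaximal
      ({ carrier := {x | (x : A) ∈ 𝔐}
         add_mem' := fun hx hy => 𝔐.add_mem hx hy
         zero_mem' := 𝔐.zero_mem
         smul_mem' := fun c x hx => by
           show ((c * x : ↥(SetLike.GradeZero.subring 𝒜)) : A) ∈ 𝔐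
           rw [Subring.coe_mul]
           exact 𝔐.smul_mem (c : A) hx } :
        Ideal (SetLike.GradeZero.subring 𝒜))) := by
  classical
  -- decomposition into even and odd components
  have hdec : ∀ a : A, a = ↑(DirectSum.decompose 𝒜 a 0) + ↑(DirectSum.decompose 𝒜 a 1) := by
    intro a
    conv_lhs => rw [← DirectSum.sum_support_decompose 𝒜 a]
    rw [Finset.sum_subset (Finset.subset_univ _) (by
      intro i _ hi
      simp [DFinsupp.notMem_support_iff.mp hi])]
    exact Fin.sum_univ_two _
  have hmem0 : ∀ a : A, (↑(DirectSum.decompose 𝒜 a 0) : A) ∈ 𝒜 0 := fun a => SetLike.coe_mem _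
  have hmem1 : ∀ a : A, (↑(DirectSum.decompose 𝒜 a 1) : A) ∈ 𝒜 1 := fun a => SetLike.coe_mem _
  -- commutation facts
  have hc00 : ∀ a ∈ 𝒜 0, ∀ b ∈ 𝒜 0, a * b = b * a := by
    intro a ha b hb
    have := hsuper 0 0 a ha b hb
    simpa using this
  have hc01 : ∀ a ∈ 𝒜 0, ∀ b ∈ 𝒜 1, a * b = b * a := by
    intro a ha b hb
    have := hsuper 0 1 a ha b hb
    simpa using this
  have hc10 : ∀ a ∈ 𝒜 1, ∀ b ∈ 𝒜 0, a * b = b * a := by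
    intro a ha b hb
    have := hsuper 1 0 a ha b hb
    simpa using this
  have hc11 : ∀ a ∈ 𝒜 1, ∀ b ∈ 𝒜 1, a * b = -(b * a) := by
    intro a ha b hb
    have := hsuper 1 1 a ha b hb
    have h1 : ((1 * 1 : ZMod 2).val) = 1 := by decide
    rw [h1] at this
    simpa using this
  have hM_ne_top : 𝔐 ≠ ⊤ := hmax.1
  have h_one_not : (1 : A) ∉ 𝔐 := by
    intro h1
    exact hM_ne_top (Submodule.eq_top_iff'.mpr fun x => by simpa using 𝔐.smul_mem x h1)
  -- every odd element lies in 𝔐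
  have hoddM : ∀ a ∈ 𝒜 1, a ∈ 𝔐 := by
    intro a ha
    by_contra hnot
    have hsup : 𝔐 ⊔ Submodule.span A {a} = ⊤ := by
      refine hmax.2 _ (lt_of_le_of_ne le_sup_left ?_)
      intro h
      have : a ∈ 𝔐 ⊔ Submodule.span A {a} :=
        Submodule.mem_sup_right (Submodule.mem_span_singleton_self a)
      rw [← h] at this
      exact hnot this
    have h1 : (1 : A) ∈ 𝔐 ⊔ Submodule.span A {a} := by rw [hsup]; trivial
    obtain ⟨m, hm, y, hy, hmy⟩ := Submodule.mem_sup.mp h1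
    obtain ⟨c, rfl⟩ := Submodule.mem_span_singleton.mp hy
    rw [smul_eq_mul] at hmy
    -- (c*a)^2 = 0
    set c0 : A := ↑(DirectSum.decompose 𝒜 c 0) with hc0
    set c1 : A := ↑(DirectSum.decompose 𝒜 c 1) with hc1
    have hac : a * c = c0 * a - c1 * a := by
      calc a * c = a * c0 + a * c1 := by rw [← mul_add, ← hdec c]
      _ = c0 * a - c1 * a := by
          rw [hc10 a ha c0 (hmem0 c), hc11 a ha c1 (hmem1 c)]; abel
    have hsq : (c * a) * (c * a) = 0 := by
      calc (c * a) * (c * a) = c * (a * c) * a := by noncomm_ring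
      _ = c * (c0 * a - c1 * a) * a := by rw [hac]
      _ = c * c0 * (a * a) - c * c1 * (a * a) := by noncomm_ring
      _ = 0 := by rw [hodd a ha]; simp
    have hunit : (1 + c * a) * m = 1 := by
      have hm' : m = 1 - c * a := eq_sub_of_add_eq hmy
      rw [hm']
      calc (1 + c * a) * (1 - c * a) = 1 - (c * a) * (c * a) := by noncomm_ring
      _ = 1 := by rw [hsq, sub_zero]
    have : (1 : A) ∈ 𝔐 := by
      have := 𝔐.smul_mem (1 + c * a) hm
      rwa [smul_eq_mul, hunit] at this
    exact h_one_not this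
  -- even components of elements of 𝔐 are in 𝔐
  have heven_mem : ∀ x ∈ 𝔐, (↑(DirectSum.decompose 𝒜 x 0) : A) ∈ 𝔐 := by
    intro x hx
    have h1 : (↑(DirectSum.decompose 𝒜 x 1) : A) ∈ 𝔐 := hoddM _ (hmem1 x)
    have : (↑(DirectSum.decompose 𝒜 x 0) : A) = x - ↑(DirectSum.decompose 𝒜 x 1) :=
      eq_sub_of_add_eq (hdec x).symm
    rw [this]
    exact 𝔐.sub_mem hx h1
  -- two-sided
  have htwo : ∀ x ∈ 𝔐, ∀ a : A, x * a ∈ 𝔐 := by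
    intro x hx a
    set x0 : A := ↑(DirectSum.decompose 𝒜 x 0)
    set x1 : A := ↑(DirectSum.decompose 𝒜 x 1)
    set a0 : A := ↑(DirectSum.decompose 𝒜 a 0)
    set a1 : A := ↑(DirectSum.decompose 𝒜 a 1)
    have hx0 : x0 ∈ 𝔐 := heven_mem x hx
    have hx1 : x1 ∈ 𝔐 := hoddM _ (hmem1 x)
    have key : x * a = a * x0 + (a0 - a1) * x1 := by
      have e1 : x0 * a = a * x0 := by
        calc x0 * a = x0 * a0 + x0 * a1 := by rw [← mul_add, ← hdec a]
        _ = a0 * x0 + a1 * x0 := by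
            rw [hc00 x0 (hmem0 x) a0 (hmem0 a), hc01 x0 (hmem0 x) a1 (hmem1 a)]
        _ = a * x0 := by rw [← add_mul, ← hdec a]
      have e2 : x1 * a = (a0 - a1) * x1 := by
        calc x1 * a = x1 * a0 + x1 * a1 := by rw [← mul_add, ← hdec a]
        _ = a0 * x1 - a1 * x1 := by
            rw [hc10 x1 (hmem1 x) a0 (hmem0 a), hc11 x1 (hmem1 x) a1 (hmem1 a)]; abel
        _ = (a0 - a1) * x1 := (sub_mul a0 a1 x1).symm
      calc x * a = x0 * a + x1 * a := by rw [← add_mul, ← hdec x]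
      _ = a * x0 + (a0 - a1) * x1 := by rw [e1, e2]
    rw [key]
    exact 𝔐.add_mem (𝔐.smul_mem a hx0) (𝔐.smul_mem (a0 - a1) hx1)
  refine ⟨htwo, hoddM, ?_, ?_⟩
  · intro x
    constructor
    · intro hx
      exact ⟨_, hmem0 x, heven_mem x hx, _, hmem1 x, hdec x⟩
    · rintro ⟨y, hy0, hyM, z, hz1, rfl⟩
      exact 𝔐.add_mem hyM (hoddM z hz1)
  · -- maximality of 𝔐 ∩ 𝒜 0
    rw [Ideal.isMaximal_iff]
    constructor
    · intro h
      exact h_one_not (by simpa using h)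
    · intro J x0 hle hx0notI hx0J
      have hx0not : (x0 : A) ∉ 𝔐 := hx0notI
      have hsup : 𝔐 ⊔ Submodule.span A {(x0 : A)} = ⊤ := by
        refine hmax.2 _ (lt_of_le_of_ne le_sup_left ?_)
        intro h
        have : (x0 : A) ∈ 𝔐 ⊔ Submodule.span A {(x0 : A)} :=
          Submodule.mem_sup_right (Submodule.mem_span_singleton_self _)
        rw [← h] at this
        exact hx0not this
      have h1 : (1 : A) ∈ 𝔐 ⊔ Submodule.span A {(x0 : A)} := by rw [hsup]; trivial
      obtain ⟨m, hm, y, hy, hmy⟩ := Submodule.mem_sup.mp h1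
      obtain ⟨c, rfl⟩ := Submodule.mem_span_singleton.mp hy
      rw [smul_eq_mul] at hmy
      set m0 : A := ↑(DirectSum.decompose 𝒜 m 0) with hm0def
      set m1 : A := ↑(DirectSum.decompose 𝒜 m 1)
      set c0 : A := ↑(DirectSum.decompose 𝒜 c 0)
      set c1 : A := ↑(DirectSum.decompose 𝒜 c 1)
      have hx0A : (x0 : A) ∈ 𝒜 0 := x0.2
      have hy0 : m0 + c0 * (x0 : A) ∈ 𝒜 0 := by
        refine AddSubgroup.add_mem _ (hmem0 m) ?_
        simpa using (SetLike.mul_mem_graded (hmem0 c) hx0A : c0 * (x0:A) ∈ 𝒜 (0 + 0))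
      have hz1 : m1 + c1 * (x0 : A) ∈ 𝒜 1 := by
        refine AddSubgroup.add_mem _ (hmem1 m) ?_
        simpa using (SetLike.mul_mem_graded (hmem1 c) hx0A : c1 * (x0:A) ∈ 𝒜 (1 + 0))
      have hsplit : (1 : A) = (m0 + c0 * (x0:A)) + (m1 + c1 * (x0:A)) := by
        have : c * (x0:A) = c0 * (x0:A) + c1 * (x0:A) := by
          rw [← add_mul, ← hdec c]
        rw [← hmy, this, hdec m]; abel
      -- the odd part must vanish
      have hz0 : m1 + c1 * (x0:A) = 0 := by
        have hz0' : m1 + c1 * (x0:A) ∈ 𝒜 0 := by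
          have : m1 + c1 * (x0:A) = 1 - (m0 + c0 * (x0:A)) := eq_sub_of_add_eq' hsplit.symm
          rw [this]
          exact AddSubgroup.sub_mem _ (SetLike.one_mem_graded 𝒜) hy0
        have e0 := DirectSum.decompose_of_mem_same 𝒜 hz0'
        have e1 := DirectSum.decompose_of_mem_ne 𝒜 hz1 (by decide : (1 : ZMod 2) ≠ 0)
        rw [e1] at e0
        exact e0.symm
      have hone : (1 : A) = m0 + c0 * (x0:A) := by rw [hsplit, hz0, add_zero]
      have hm0M : m0 ∈ 𝔐 := heven_mem m hm
      -- transfer to the subring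
      have hone' : (1 : SetLike.GradeZero.subring 𝒜) =
          ⟨m0, hmem0 m⟩ + ⟨c0, hmem0 c⟩ * x0 := by
        apply Subtype.ext
        push_cast
        exact hone
      rw [hone']
      exact J.add_mem (hle hm0M) (J.mul_mem_left _ hx0J)
end

section
/- Let A be a commutative superalgebra and B ⊆ A a graded subring (i.e. B = (B ∩ 𝒜 0) ⊕ (B ∩ 𝒜 1)). If A is finitely generated as a B-module, then every even element of A (every element of 𝒜 0) is integral over the commutative ring B₀ = B ∩ 𝒜 0. -/
set_option maxHeartbeats 1000000
set_option synthInstance.maxHeartbeats 400000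

section ListLemmas
variable {A : Type*} [Ring A] {P : A → Prop}

lemma odd_mem_mul_prod_zero
    (hanti : ∀ u v, P u → P v → u * v = -(v * u))
    (hsq : ∀ u, P u → u * u = 0) :
    ∀ l : List A, (∀ u ∈ l, P u) → ∀ v, P v → v ∈ l → v * l.prod = 0 := by
  intro l
  induction l with
  | nil => intro _ v _ hv; simp at hv
  | cons u t ih =>
    intro h v hv hmem
    have hu : P u := h u List.mem_cons_self
    have ht : ∀ w ∈ t, P w := fun w hw => h w (List.mem_cons_of_mem _ hw)
    rw [List.prod_cons, ← mul_assoc]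
    rcases List.mem_cons.mp hmem with rfl | hvt
    · rw [hsq v hv, zero_mul]
    · rw [hanti v u hv hu, neg_mul, mul_assoc, ih ht v hv hvt, mul_zero, neg_zero]

lemma odd_not_nodup_prod_zero
    (hanti : ∀ u v, P u → P v → u * v = -(v * u))
    (hsq : ∀ u, P u → u * u = 0) :
    ∀ l : List A, (∀ u ∈ l, P u) → ¬ l.Nodup → l.prod = 0 := by
  intro l
  induction l with
  | nil => intro _ h; exact absurd List.nodup_nil h
  | cons u t ih =>
    intro h hnd
    have hu : P u := h u List.mem_cons_self
    have ht : ∀ w ∈ t, P w := fun w hw => h w (List.mem_cons_of_mem _ hw)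
    rw [List.prod_cons]
    by_cases hut : u ∈ t
    · exact odd_mem_mul_prod_zero hanti hsq t ht u hu hut
    · have hnt : ¬ t.Nodup := fun hnt => hnd (List.nodup_cons.mpr ⟨hut, hnt⟩)
      rw [ih ht hnt, mul_zero]

end ListLemmas

/-- Let `A` be a commutative superalgebra and `B ⊆ A` a graded subring
(every element of `B` is the sum of an even and an odd element of `B`).  If `A` is
finitely generated as a `B`-module, then every even element of `A` is integral over the
ring `B₀ = B ∩ 𝒜 0`: it satisfies a monic polynomial all of whose coefficients lie in
`B ∩ 𝒜 0`. -/
theorem even_integral_of_module_finite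
    {A : Type*} [Ring A] (𝒜 : ZMod 2 → AddSubgroup A) [GradedRing 𝒜]
    (hsuper : ∀ (i j : ZMod 2), ∀ a ∈ 𝒜 i, ∀ b ∈ 𝒜 j,
      a * b = ((-1 : ℤ) ^ ((i * j).val)) • (b * a))
    (hodd : ∀ a ∈ 𝒜 1, a * a = 0)
    (B : Subring A)
    (hgraded : ∀ b ∈ B, ∃ b₀ b₁ : A, b₀ ∈ B ∧ b₀ ∈ 𝒜 0 ∧ b₁ ∈ B ∧ b₁ ∈ 𝒜 1 ∧
      b = b₀ + b₁)
    [Module.Finite B A] :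
    ∀ a ∈ 𝒜 0, ∃ p : Polynomial A, p.Monic ∧
      (∀ k : ℕ, p.coeff k ∈ B ∧ p.coeff k ∈ 𝒜 0) ∧ p.eval a = 0 := by
  classical
  intro a ha
  -- even elements are central
  have hcentral : ∀ x ∈ 𝒜 0, ∀ y : A, x * y = y * x := by
    intro x hx y
    refine DirectSum.Decomposition.inductionOn 𝒜 (motive := fun y => x * y = y * x) (by simp) ?_ ?_ y
    · intro j m
      have := hsuper 0 j x hx m m.2
      simpa using this
    · intro y₁ y₂ h1 h2; rw [mul_add, add_mul, h1, h2]
  have hanti : ∀ u v : A, u ∈ 𝒜 1 → v ∈ 𝒜 1 → u * v = -(v * u) := by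
    intro u v hu hv
    have := hsuper 1 1 u hu v hv
    have hv1 : ((1 : ZMod 2) * 1).val = 1 := rfl
    rw [hv1] at this
    simpa using this
  have hmul0 : ∀ {x y : A}, x ∈ 𝒜 0 → y ∈ 𝒜 0 → x * y ∈ 𝒜 0 := by
    intro x y hx hy; simpa using SetLike.mul_mem_graded hx hy
  have hpow0 : ∀ n : ℕ, a ^ n ∈ 𝒜 0 := by
    intro n
    induction n with
    | zero => simpa using SetLike.one_mem_graded 𝒜
    | succ n ih => rw [pow_succ]; exact hmul0 ih ha
  -- the even part of B
  let B₀ : Subring A :=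
    { carrier := {x | x ∈ B ∧ x ∈ 𝒜 0}
      zero_mem' := ⟨B.zero_mem, (𝒜 0).zero_mem⟩
      one_mem' := ⟨B.one_mem, SetLike.one_mem_graded 𝒜⟩
      add_mem' := fun hx hy => ⟨B.add_mem hx.1 hy.1, (𝒜 0).add_mem hx.2 hy.2⟩
      neg_mem' := fun hx => ⟨B.neg_mem hx.1, (𝒜 0).neg_mem hx.2⟩
      mul_mem' := fun hx hy => ⟨B.mul_mem hx.1 hy.1, hmul0 hx.2 hy.2⟩ }
  have hB₀mem : ∀ c : ↥B₀, (c : A) ∈ B ∧ (c : A) ∈ 𝒜 0 := fun c => c.2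
  letI : CommRing ↥B₀ :=
    { (inferInstance : Ring ↥B₀) with
      mul_comm := fun x y => Subtype.ext (hcentral x.1 (hB₀mem x).2 y.1) }
  have hsmulB : ∀ (c : ↥B) (y : A), c • y = (c : A) * y := fun c y => rfl
  have hsmulB₀ : ∀ (c : ↥B₀) (y : A), c • y = (c : A) * y := fun c y => rfl
  obtain ⟨S, hS⟩ : ∃ S : Finset A, Submodule.span B (↑S : Set A) = ⊤ :=
    Module.finite_def.mp ‹Module.Finite B A›
  -- representation of a * x for all x
  have rep : ∀ x : A, ∃ f : A → A, (∀ y, f y ∈ B) ∧ ∑ y ∈ S, f y * y = a * x := by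
    intro x
    have hx : a * x ∈ Submodule.span B (↑S : Set A) := by rw [hS]; trivial
    obtain ⟨f, -, hf⟩ := Submodule.mem_span_finset.mp hx
    refine ⟨fun y => ↑(f y), fun y => (f y).2, ?_⟩
    rw [← hf]
    exact Finset.sum_congr rfl fun y _ => (hsmulB (f y) y).symm
  choose F hFB hFs using rep
  have repEO : ∀ x y : A, ∃ e o : A, (e ∈ B ∧ e ∈ 𝒜 0) ∧ (o ∈ B ∧ o ∈ 𝒜 1) ∧ F x y = e + o := by
    intro x y
    obtain ⟨e, o, h1, h2, h3, h4, h5⟩ := hgraded (F x y) (hFB x y)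
    exact ⟨e, o, ⟨h1, h2⟩, ⟨h3, h4⟩, h5⟩
  choose E O hE hO hEO using repEO
  -- the finite set of odd coefficients
  let Os : Finset A := Finset.image (fun p : A × A => O p.1 p.2) (S ×ˢ S)
  have hOs1 : ∀ u ∈ Os, u ∈ 𝒜 1 := by
    intro u hu
    obtain ⟨p, _, rfl⟩ := Finset.mem_image.mp hu
    exact (hO p.1 p.2).2
  set m := Os.card with hm
  -- generating set of the B₀-module N
  let Gs : Set A := {z | ∃ (l : List A) (x : A), x ∈ S ∧ (∀ u ∈ l, u ∈ Os) ∧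
    l.length ≤ m ∧ z = l.prod * x}
  have hGfin : Gs.Finite := by
    have h1 : {l : List ↥Os | l.length ≤ m}.Finite := List.finite_length_le _ m
    have h2 := (h1.prod S.finite_toSet).image
      (fun p : List ↥Os × A => (p.1.map Subtype.val).prod * p.2)
    refine h2.subset ?_
    rintro z ⟨l, x, hxS, hl, hlen, rfl⟩
    refine ⟨⟨l.pmap (fun u hu => (⟨u, hu⟩ : ↥Os)) hl, x⟩, ⟨?_, hxS⟩, ?_⟩
    · simpa [List.length_pmap] using hlen
    · simp only [List.map_pmap]
      simp [List.pmap_eq_map]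
  let N : Submodule ↥B₀ A := Submodule.span ↥B₀ Gs
  haveI : Module.Finite ↥B₀ ↥N := Module.Finite.span_of_finite _ hGfin
  have hSN : ∀ x ∈ S, x ∈ N := by
    intro x hx
    exact Submodule.subset_span ⟨[], x, hx, by simp, by simp, by simp⟩
  -- N is stable under multiplication by a
  have hstab : ∀ z ∈ N, a * z ∈ N := by
    intro z hz
    induction hz using Submodule.span_induction with
    | mem z hzG =>
      obtain ⟨l, x, hxS, hl, hlen, rfl⟩ := hzG
      have hax : a * (l.prod * x) =
          ∑ y ∈ S, (E x y * (l.prod * y) + (l.concat (O x y)).prod * y) := by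
        calc a * (l.prod * x) = l.prod * (a * x) := by
              rw [← mul_assoc, hcentral a ha l.prod, mul_assoc]
          _ = l.prod * ∑ y ∈ S, F x y * y := by rw [hFs]
          _ = ∑ y ∈ S, l.prod * (F x y * y) := Finset.mul_sum _ _ _
          _ = ∑ y ∈ S, (E x y * (l.prod * y) + (l.concat (O x y)).prod * y) := by
              refine Finset.sum_congr rfl fun y _ => ?_
              rw [hEO x y, add_mul, mul_add, List.prod_concat]
              congr 1
              · rw [← mul_assoc, ← hcentral (E x y) (hE x y).2 l.prod, mul_assoc]
              · rw [mul_assoc]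
      rw [hax]
      refine Submodule.sum_mem _ fun y hyS => Submodule.add_mem _ ?_ ?_
      · have hgen : l.prod * y ∈ N := Submodule.subset_span ⟨l, y, hyS, hl, hlen, rfl⟩
        have := N.smul_mem (⟨E x y, (hE x y).1, (hE x y).2⟩ : ↥B₀) hgen
        rwa [hsmulB₀] at this
      · have hOxy : O x y ∈ Os :=
          Finset.mem_image.mpr ⟨(x, y), Finset.mem_product.mpr ⟨hxS, hyS⟩, rfl⟩
        have hconc : ∀ u ∈ l.concat (O x y), u ∈ Os := by
          intro u hu
          rw [List.concat_eq_append, List.mem_append] at hu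
          rcases hu with h | h
          · exact hl u h
          · rw [List.mem_singleton] at h; subst h; exact hOxy
        by_cases hlen2 : l.length + 1 ≤ m
        · refine Submodule.subset_span ⟨l.concat (O x y), y, hyS, hconc, ?_, rfl⟩
          simpa [List.length_concat] using hlen2
        · have hnd : ¬ (l.concat (O x y)).Nodup := by
            intro hnd
            have h1 : (l.concat (O x y)).toFinset ⊆ Os := by
              intro u hu; rw [List.mem_toFinset] at hu; exact hconc u hu
            have h2 := Finset.card_le_card h1
            rw [List.toFinset_card_of_nodup hnd] at h2
            simp only [List.length_concat] at h2
            omega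
          have hz0 : (l.concat (O x y)).prod = 0 :=
            odd_not_nodup_prod_zero hanti (fun u hu => hodd u hu) _
              (fun u hu => hOs1 u (hconc u hu)) hnd
          rw [hz0, zero_mul]
          exact N.zero_mem
    | zero => rw [mul_zero]; exact N.zero_mem
    | add y₁ y₂ h₁ h₂ ih₁ ih₂ => rw [mul_add]; exact N.add_mem ih₁ ih₂
    | smul c y hy ihy =>
      rw [hsmulB₀, ← mul_assoc, hcentral a ha (c : A), mul_assoc]
      have := N.smul_mem c ihy
      rwa [hsmulB₀] at this
  -- the endomorphism of N given by multiplication by a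
  let f : Module.End ↥B₀ ↥N :=
    { toFun := fun v => ⟨a * v.1, hstab v.1 v.2⟩
      map_add' := fun v w => Subtype.ext (mul_add a v.1 w.1)
      map_smul' := fun c v => Subtype.ext (by
        show a * ((c : A) * v.1) = (c : A) * (a * v.1)
        rw [← mul_assoc, ← hcentral (c : A) (hB₀mem c).2 a, mul_assoc]) }
  have hInt : IsIntegral ↥B₀ f := Algebra.IsIntegral.isIntegral f
  obtain ⟨q, hqm, hq⟩ := hInt
  set n := q.natDegree + 1 with hn
  have hpowf : ∀ (i : ℕ) (v : ↥N), ((f ^ i) v : A) = a ^ i * (v : A) := by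
    intro i
    induction i with
    | zero => intro v; simp
    | succ i ih =>
      intro v
      rw [pow_succ, pow_succ, Module.End.mul_apply, ih]
      show a ^ i * (a * (v : A)) = a ^ i * a * (v : A)
      rw [mul_assoc]
  set p : Polynomial A := q.map B₀.subtype with hp
  have hpcoeff : ∀ k : ℕ, p.coeff k = ((q.coeff k : ↥B₀) : A) := by
    intro k; rw [hp, Polynomial.coeff_map]; rfl
  have hpeval : Polynomial.eval a p = ∑ i ∈ Finset.range n, ((q.coeff i : ↥B₀) : A) * a ^ i := by
    rw [Polynomial.eval_eq_sum_range'
      (lt_of_le_of_lt Polynomial.natDegree_map_le (Nat.lt_succ_self _))]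
    exact Finset.sum_congr rfl fun i _ => by rw [hpcoeff]
  have hEval : ∀ x : A, x ∈ N → Polynomial.eval a p * x = 0 := by
    intro x hxN
    have h0 : (Polynomial.aeval f) q = 0 := by rw [Polynomial.aeval_def]; exact hq
    have h1 : (∑ i ∈ Finset.range n, q.coeff i • f ^ i) = 0 := by
      rw [← Polynomial.aeval_eq_sum_range, h0]
    have h2 : ((∑ i ∈ Finset.range n, q.coeff i • f ^ i) ⟨x, hxN⟩ : A) = 0 := by
      rw [h1]; rfl
    rw [LinearMap.sum_apply] at h2
    have h3 : ∑ i ∈ Finset.range n, ((q.coeff i : ↥B₀) : A) * (a ^ i * x) = 0 := by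
      rw [← h2]
      push_cast
      refine Finset.sum_congr rfl fun i _ => ?_
      rw [LinearMap.smul_apply]
      show ((q.coeff i : ↥B₀) : A) * (a ^ i * x) = ((q.coeff i • ((f ^ i) ⟨x, hxN⟩) : ↥N) : A)
      rw [Submodule.coe_smul, hsmulB₀, hpowf]
    rw [hpeval, Finset.sum_mul, ← h3]
    exact Finset.sum_congr rfl fun i _ => mul_assoc _ _ _
  have hpeven : Polynomial.eval a p ∈ 𝒜 0 := by
    rw [hpeval]
    exact AddSubgroup.sum_mem _ fun i _ => hmul0 ((q.coeff i : ↥B₀)).2.2 (hpow0 i)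
  refine ⟨p, hqm.map _, fun k => by rw [hpcoeff]; exact ((q.coeff k : ↥B₀)).2, ?_⟩
  obtain ⟨c, hc⟩ : ∃ c : A → ↥B, ∑ y ∈ S, c y • y = (1 : A) := by
    have h1 : (1 : A) ∈ Submodule.span B (↑S : Set A) := by
      rw [hS]; trivial
    obtain ⟨c, -, hc⟩ := Submodule.mem_span_finset.mp h1
    exact ⟨c, hc⟩
  have key : Polynomial.eval a p * (∑ y ∈ S, c y • y) = 0 := by
    rw [Finset.mul_sum]
    refine Finset.sum_eq_zero fun y hy => ?_
    rw [hsmulB, ← mul_assoc, hcentral _ hpeven (c y : A), mul_assoc,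
      hEval y (hSN y hy), mul_zero]
  rw [hc, mul_one] at key
  exact key
end

section
/- Let K be a field, let A be a commutative superalgebra that is also a K-algebra finitely generated as a K-algebra, and let B ⊆ A be a graded K-subalgebra (B = (B ∩ 𝒜 0) ⊕ (B ∩ 𝒜 1)). If every even element of A is integral over the commutative ring B₀ = B ∩ 𝒜 0, then A is finitely generated as a B-module and B is finitely generated as a K-algebra. -/
set_option maxHeartbeats 1000000
set_option synthInstance.maxHeartbeats 400000

/-- Artin–Tate lemma, allowing the top ring to be noncommutative. -/
theorem artinTate_general (A B C : Type*) [CommRing A] [CommRing B] [Ring C]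
    [Algebra A B] [Algebra B C] [Algebra A C] [IsScalarTower A B C]
    [IsNoetherianRing A] (hAC : (⊤ : Subalgebra A C).FG)
    (hBC : (⊤ : Submodule B C).FG) (hBCi : Function.Injective (algebraMap B C)) :
    (⊤ : Subalgebra A B).FG :=
  let ⟨B₀, hAB₀, hB₀C⟩ := exists_subalgebra_of_fg A B C hAC hBC
  Algebra.fg_trans' (B₀.fg_top.2 hAB₀) <|
    Subalgebra.fg_of_submodule_fg <|
      have : IsNoetherianRing B₀ := isNoetherianRing_of_fg hAB₀
      have : Module.Finite B₀ C := ⟨hB₀C⟩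
      fg_of_injective (IsScalarTower.toAlgHom B₀ B C).toLinearMap hBCi

/-- Let `K` be a field and `A` a commutative superalgebra which is a
finitely generated `K`-algebra whose grading consists of `K`-submodules, and let
`B ⊆ A` be a graded `K`-subalgebra.  If every even element of `A` is integral over
`B₀ = B ∩ 𝒜 0`, then `A` is a finitely generated `B`-module and `B` is a finitely
generated `K`-algebra. -/
theorem module_finite_and_fg_of_even_integral
    {K A : Type*} [Field K] [Ring A] [Algebra K A]
    (𝒜 : ZMod 2 → AddSubgroup A) [GradedRing 𝒜]
    (hsuper : ∀ (i j : ZMod 2), ∀ a ∈ 𝒜 i, ∀ b ∈ 𝒜 j,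
      a * b = ((-1 : ℤ) ^ ((i * j).val)) • (b * a))
    (hodd : ∀ a ∈ 𝒜 1, a * a = 0)
    (hKsub : ∀ (k : K) (i : ZMod 2), ∀ a ∈ 𝒜 i, k • a ∈ 𝒜 i)
    [Algebra.FiniteType K A]
    (B : Subalgebra K A)
    (hgraded : ∀ b ∈ B, ∃ b₀ b₁ : A, b₀ ∈ B ∧ b₀ ∈ 𝒜 0 ∧ b₁ ∈ B ∧ b₁ ∈ 𝒜 1 ∧
      b = b₀ + b₁)
    (hint : ∀ a ∈ 𝒜 0, ∃ p : Polynomial A, p.Monic ∧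
      (∀ k : ℕ, p.coeff k ∈ B ∧ p.coeff k ∈ 𝒜 0) ∧ p.eval a = 0) :
    Module.Finite B A ∧ B.FG := by
  classical
  -- even elements commute with homogeneous elements
  have hcomm0 : ∀ a ∈ 𝒜 0, ∀ (j : ZMod 2), ∀ b ∈ 𝒜 j, a * b = b * a := by
    intro a ha j b hb
    have h := hsuper 0 j a ha b hb
    rw [zero_mul] at h
    simpa using h
  -- even elements are central
  have hcentral : ∀ a ∈ 𝒜 0, ∀ b : A, a * b = b * a := by
    intro a ha b
    conv_lhs => rw [← DirectSum.sum_support_decompose 𝒜 b]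
    conv_rhs => rw [← DirectSum.sum_support_decompose 𝒜 b]
    rw [Finset.mul_sum, Finset.sum_mul]
    exact Finset.sum_congr rfl fun i _ => hcomm0 a ha i _ (SetLike.coe_mem _)
  -- the even part as a subalgebra
  have h00 : ∀ {a b : A}, a ∈ 𝒜 0 → b ∈ 𝒜 0 → a * b ∈ 𝒜 0 := by
    intro a b ha hb
    simpa using SetLike.mul_mem_graded ha hb
  have h11 : ∀ {a b : A}, a ∈ 𝒜 1 → b ∈ 𝒜 1 → a * b ∈ 𝒜 0 := by
    intro a b ha hb
    have := SetLike.mul_mem_graded ha hb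
    have e : (1 + 1 : ZMod 2) = 0 := by decide
    rwa [e] at this
  have halg : ∀ k : K, (algebraMap K A) k ∈ 𝒜 0 := by
    intro k
    rw [Algebra.algebraMap_eq_smul_one]
    exact hKsub k 0 1 (SetLike.one_mem_graded 𝒜)
  set A₀ : Subalgebra K A :=
    { carrier := 𝒜 0
      mul_mem' := fun ha hb => h00 ha hb
      one_mem' := SetLike.one_mem_graded 𝒜
      add_mem' := fun ha hb => add_mem ha hb
      zero_mem' := zero_mem _
      algebraMap_mem' := halg } with hA₀def
  have hA₀mem : ∀ {x : A}, x ∈ A₀ ↔ x ∈ 𝒜 0 := Iff.rfl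
  letI : CommRing ↥A₀ :=
    { (inferInstance : Ring ↥A₀) with
      mul_comm := fun x y => Subtype.ext (hcomm0 x.1 x.2 0 y.1 y.2) }
  letI : Algebra ↥A₀ A :=
    { toSMul := inferInstance
      algebraMap := (Subalgebra.val A₀).toRingHom
      commutes' := fun r x => hcentral r.1 r.2 x
      smul_def' := fun r x => rfl }
  haveI : IsScalarTower K ↥A₀ A :=
    ⟨fun k a x => by
      show ((k • a : ↥A₀) : A) * x = k • ((a : A) * x)
      rw [show ((k • a : ↥A₀) : A) = k • (a : A) from rfl]
      exact smul_mul_assoc k _ _⟩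
  -- generators of A
  obtain ⟨s, hs⟩ := ‹Algebra.FiniteType K A›.out
  set e : A → A := fun x => ↑(DirectSum.decompose 𝒜 x 0) with hedef
  set o : A → A := fun x => ↑(DirectSum.decompose 𝒜 x 1) with hodef
  have hxeo : ∀ x : A, x = e x + o x := by
    intro x
    have huniv : (Finset.univ : Finset (ZMod 2)) = {0, 1} := by decide
    have h2 : ∑ i : ZMod 2, (↑(DirectSum.decompose 𝒜 x i) : A) = x := by
      conv_rhs => rw [← DirectSum.sum_support_decompose 𝒜 x]
      symm
      apply Finset.sum_subset (Finset.subset_univ _)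
      intro i _ hi
      rw [DFinsupp.notMem_support_iff.mp hi]
      exact ZeroMemClass.coe_zero _
    rw [huniv] at h2
    rw [Finset.sum_pair (by decide : (0 : ZMod 2) ≠ 1)] at h2
    exact h2.symm
  set T : Finset A := insert 1 (s.image o) with hTdef
  have hT1 : (1 : A) ∈ T := Finset.mem_insert_self _ _
  set P : Submodule ↥A₀ A := Submodule.span ↥A₀ (T : Set A) with hPdef
  have hsmul_eq : ∀ (c : ↥A₀) (x : A), c • x = (c : A) * x := fun c x => rfl
  have hmem_of_even : ∀ x : A, x ∈ 𝒜 0 → x ∈ P := by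
    intro x hx
    have : x = (⟨x, hx⟩ : ↥A₀) • (1 : A) := by rw [hsmul_eq]; exact (mul_one x).symm
    rw [this]
    exact P.smul_mem _ (Submodule.subset_span hT1)
  have hTmem : ∀ t ∈ T, t = 1 ∨ t ∈ 𝒜 1 := by
    intro t ht
    rcases Finset.mem_insert.mp ht with h | h
    · exact Or.inl h
    · obtain ⟨x, _, rfl⟩ := Finset.mem_image.mp h
      exact Or.inr (SetLike.coe_mem _)
  have htt : ∀ t ∈ T, ∀ u ∈ T, t * u ∈ P := by
    intro t ht u hu
    rcases hTmem t ht with rfl | ht1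
    · rw [one_mul]; exact Submodule.subset_span hu
    rcases hTmem u hu with rfl | hu1
    · rw [mul_one]; exact Submodule.subset_span ht
    · exact hmem_of_even _ (h11 ht1 hu1)
  have hmulT : ∀ u ∈ (T : Set A), ∀ p, p ∈ P → p * u ∈ P := by
    intro u hu p hp
    induction hp using Submodule.span_induction with
    | mem x hx => exact htt x hx u hu
    | zero => rw [zero_mul]; exact P.zero_mem
    | add x y _ _ hx hy => rw [add_mul]; exact P.add_mem hx hy
    | smul c x _ hx =>
      rw [hsmul_eq, mul_assoc, ← hsmul_eq]
      exact P.smul_mem _ hx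
  have hmul : ∀ p ∈ P, ∀ q ∈ P, p * q ∈ P := by
    intro p hp q hq
    induction hq using Submodule.span_induction with
    | mem x hx => exact hmulT x hx p hp
    | zero => rw [mul_zero]; exact P.zero_mem
    | add x y _ _ hx hy => rw [mul_add]; exact P.add_mem hx hy
    | smul c x _ hx =>
      have : p * (c • x) = c • (p * x) := by
        rw [hsmul_eq, hsmul_eq, ← mul_assoc, ← hcentral c.1 c.2 p, mul_assoc]
      rw [this]
      exact P.smul_mem _ hx
  -- P is a subalgebra, hence everything
  have hPtop : P = ⊤ := by
    set S' : Subalgebra K A :=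
      { carrier := P
        mul_mem' := fun ha hb => hmul _ ha _ hb
        one_mem' := Submodule.subset_span hT1
        add_mem' := fun ha hb => P.add_mem ha hb
        zero_mem' := P.zero_mem
        algebraMap_mem' := fun k => hmem_of_even _ (halg k) } with hS'def
    have hsub : (s : Set A) ⊆ S' := by
      intro x hx
      have hex : e x ∈ P := hmem_of_even _ (SetLike.coe_mem _)
      have hox : o x ∈ P :=
        Submodule.subset_span (Finset.mem_insert_of_mem (Finset.mem_image_of_mem o hx))
      have : x ∈ P := by rw [hxeo x]; exact P.add_mem hex hox
      exact this
    rw [eq_top_iff]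
    intro x _
    have : x ∈ Algebra.adjoin K (s : Set A) := by rw [hs]; trivial
    exact Algebra.adjoin_le hsub this
  haveI hFA₀ : Module.Finite ↥A₀ A := ⟨⟨T, hPtop⟩⟩
  -- Artin–Tate: A₀ is a finitely generated K-algebra
  have hvalinj : Function.Injective (algebraMap ↥A₀ A) := fun x y h => Subtype.ext h
  have hA₀top : (⊤ : Subalgebra K ↥A₀).FG :=
    artinTate_general K ↥A₀ A ‹Algebra.FiniteType K A›.out hFA₀.fg_top hvalinj
  haveI : Algebra.FiniteType K ↥A₀ := ⟨hA₀top⟩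
  -- B₀
  set B₀ : Subalgebra K A :=
    { carrier := {a | a ∈ B ∧ a ∈ 𝒜 0}
      mul_mem' := fun ha hb => ⟨B.mul_mem ha.1 hb.1, h00 ha.2 hb.2⟩
      one_mem' := ⟨B.one_mem, SetLike.one_mem_graded 𝒜⟩
      add_mem' := fun ha hb => ⟨B.add_mem ha.1 hb.1, add_mem ha.2 hb.2⟩
      zero_mem' := ⟨B.zero_mem, zero_mem _⟩
      algebraMap_mem' := fun k => ⟨B.algebraMap_mem k, halg k⟩ } with hB₀def
  have hB₀A₀ : B₀ ≤ A₀ := fun x hx => hx.2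
  have hB₀B : B₀ ≤ B := fun x hx => hx.1
  letI : CommRing ↥B₀ :=
    { (inferInstance : Ring ↥B₀) with
      mul_comm := fun x y => Subtype.ext (hcomm0 x.1 x.2.2 0 y.1 y.2.2) }
  letI : Algebra ↥B₀ A :=
    { toSMul := inferInstance
      algebraMap := (Subalgebra.val B₀).toRingHom
      commutes' := fun r x => hcentral r.1 r.2.2 x
      smul_def' := fun r x => rfl }
  haveI : IsScalarTower K ↥B₀ A :=
    ⟨fun k a x => by
      show ((k • a : ↥B₀) : A) * x = k • ((a : A) * x)
      rw [show ((k • a : ↥B₀) : A) = k • (a : A) from rfl]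
      exact smul_mul_assoc k _ _⟩
  letI : Algebra ↥B₀ ↥A₀ := (Subalgebra.inclusion hB₀A₀).toRingHom.toAlgebra
  have hinclsmul : ∀ (b : ↥B₀) (a : ↥A₀), ((b • a : ↥A₀) : A) = (b : A) * (a : A) :=
    fun b a => rfl
  haveI : IsScalarTower K ↥B₀ ↥A₀ :=
    ⟨fun k b a => by
      apply Subtype.ext
      rw [show ((((k • b : ↥B₀)) • a : ↥A₀) : A) = ((k • b : ↥B₀) : A) * (a : A) from rfl]
      rw [show ((k • b : ↥B₀) : A) = k • (b : A) from rfl]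
      rw [show ((k • ((b • a : ↥A₀)) : ↥A₀) : A) = k • (((b • a : ↥A₀)) : A) from rfl]
      rw [hinclsmul]
      exact smul_mul_assoc k _ _⟩
  haveI : IsScalarTower ↥B₀ ↥A₀ A :=
    ⟨fun b a x => by
      show (((b • a : ↥A₀)) : A) * x = (b : A) * ((a : A) * x)
      rw [hinclsmul, mul_assoc]⟩
  haveI : Algebra.FiniteType ↥B₀ ↥A₀ :=
    Algebra.FiniteType.of_restrictScalars_finiteType K ↥B₀ ↥A₀
  -- integrality
  haveI : Algebra.IsIntegral ↥B₀ ↥A₀ := by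
    constructor
    intro x
    obtain ⟨p, hpm, hpc, hpe⟩ := hint x.1 x.2
    set q : Polynomial ↥B₀ :=
      ∑ k ∈ Finset.range (p.natDegree + 1),
        Polynomial.monomial k (⟨p.coeff k, (hpc k).1, (hpc k).2⟩ : ↥B₀) with hqdef
    have hqmap : q.map (algebraMap ↥B₀ A) = p := by
      rw [hqdef, Polynomial.map_sum]
      simp only [Polynomial.map_monomial]
      exact (Polynomial.as_sum_range' p (p.natDegree + 1) (Nat.lt_succ_self _)).symm
    have hBvalinj : Function.Injective (algebraMap ↥B₀ A) := fun a b h => Subtype.ext h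
    have hqmonic : q.Monic := Polynomial.monic_of_injective hBvalinj (by rw [hqmap]; exact hpm)
    refine ⟨q, hqmonic, ?_⟩
    apply hvalinj
    rw [map_zero]
    have hcomp : (algebraMap ↥A₀ A).comp (algebraMap ↥B₀ ↥A₀) = algebraMap ↥B₀ A := by
      ext a; rfl
    rw [show (algebraMap ↥A₀ A) (Polynomial.eval₂ (algebraMap ↥B₀ ↥A₀) x q)
        = Polynomial.eval₂ ((algebraMap ↥A₀ A).comp (algebraMap ↥B₀ ↥A₀))
            ((algebraMap ↥A₀ A) x) q from Polynomial.hom_eval₂ q _ _ x]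
    rw [hcomp]
    rw [← Polynomial.eval_map, hqmap]
    exact hpe
  haveI hFBA₀ : Module.Finite ↥B₀ ↥A₀ := Algebra.IsIntegral.finite
  haveI hFB₀A : Module.Finite ↥B₀ A := Module.Finite.trans ↥A₀ A
  -- first conclusion
  letI : Algebra ↥B₀ ↥B := RingHom.toAlgebra' (Subalgebra.inclusion hB₀B).toRingHom
    (fun c x => Subtype.ext (hcentral c.1 c.2.2 x.1))
  haveI : IsScalarTower ↥B₀ ↥B A :=
    ⟨fun b c x => by
      show (((b • c : ↥B)) : A) * x = (b : A) * ((c : A) * x)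
      rw [show (((b • c : ↥B)) : A) = (b : A) * (c : A) from rfl, mul_assoc]⟩
  haveI hModFin : Module.Finite ↥B A := Module.Finite.of_restrictScalars_finite ↥B₀ ↥B A
  -- Artin–Tate: B₀ is a finitely generated K-algebra
  have hB₀top : (⊤ : Subalgebra K ↥B₀).FG :=
    artinTate_general K ↥B₀ A ‹Algebra.FiniteType K A›.out hFB₀A.fg_top
      (fun a b h => Subtype.ext h)
  have hB₀fg : B₀.FG := B₀.fg_top.1 hB₀top
  haveI : Algebra.FiniteType K ↥B₀ := ⟨hB₀top⟩
  haveI : IsNoetherianRing ↥B₀ := Algebra.FiniteType.isNoetherianRing K ↥B₀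
  haveI : IsNoetherian ↥B₀ A := isNoetherian_of_isNoetherianRing_of_finite ↥B₀ A
  -- B as a B₀-submodule of A
  set MB : Submodule ↥B₀ A :=
    { carrier := B
      add_mem' := fun ha hb => B.add_mem ha hb
      zero_mem' := B.zero_mem
      smul_mem' := fun c x hx => by
        show (c : A) * x ∈ B
        exact B.mul_mem (hB₀B c.2) hx } with hMBdef
  obtain ⟨t, ht⟩ := IsNoetherian.noetherian MB
  obtain ⟨S₀, hS₀⟩ := hB₀fg
  refine ⟨hModFin, ⟨S₀ ∪ t, le_antisymm ?_ ?_⟩⟩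
  · apply Algebra.adjoin_le
    rw [Finset.coe_union]
    apply Set.union_subset
    · intro x hx
      exact hB₀B (hS₀ ▸ Algebra.subset_adjoin hx : x ∈ B₀)
    · intro x hx
      have : x ∈ MB := ht ▸ Submodule.subset_span hx
      exact this
  · intro b hb
    have hbMB : b ∈ Submodule.span ↥B₀ (t : Set A) := by rw [ht]; exact hb
    clear hb
    induction hbMB using Submodule.span_induction with
    | mem x hx =>
      exact Algebra.subset_adjoin (by
        rw [Finset.coe_union]; exact Set.mem_union_right _ hx)
    | zero => exact Subalgebra.zero_mem _
    | add x y _ _ hx hy => exact Subalgebra.add_mem _ hx hy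
    | smul c x _ hx =>
      obtain ⟨cv, hc⟩ := c
      rw [← hS₀] at hc
      have hmono : Algebra.adjoin K (S₀ : Set A) ≤ Algebra.adjoin K (↑(S₀ ∪ t) : Set A) := by
        apply Algebra.adjoin_mono
        rw [Finset.coe_union]
        exact Set.subset_union_left
      exact show cv * x ∈ Algebra.adjoin K (↑(S₀ ∪ t) : Set A) from
        Subalgebra.mul_mem _ (hmono hc) hx
end

section
/- Let A be a commutative superalgebra and φ : A → A an odd right superderivation. If there exist even elements f₁, …, f_n ∈ 𝒜 0 and odd elements h₁, …, h_n ∈ 𝒜 1 such that Σᵢ fᵢ·φ(hᵢ) = 1, then the odd element h = Σᵢ fᵢ·hᵢ satisfies that φ(h) is a unit of A. -/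
/-- Let `A` be a commutative superalgebra and `φ : A → A` an odd right
superderivation.  If there exist even elements `f₁, …, f_n` and odd elements
`h₁, …, h_n` with `Σᵢ fᵢ * φ(hᵢ) = 1`, then `φ(Σᵢ fᵢ * hᵢ)` is a unit of `A`. -/
theorem isUnit_superderivation_of_sum_eq_one
    {A : Type*} [Ring A] (𝒜 : ZMod 2 → AddSubgroup A) [GradedRing 𝒜]
    (hsuper : ∀ (i j : ZMod 2), ∀ a ∈ 𝒜 i, ∀ b ∈ 𝒜 j,
      a * b = ((-1 : ℤ) ^ ((i * j).val)) • (b * a))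
    (hodd : ∀ a ∈ 𝒜 1, a * a = 0)
    (φ : A →+ A)
    (hφdeg : ∀ i : ZMod 2, ∀ a ∈ 𝒜 i, φ a ∈ 𝒜 (i + 1))
    (hφmul : ∀ (f₁ : A) (j : ZMod 2), ∀ f₂ ∈ 𝒜 j,
      φ (f₁ * f₂) = f₁ * φ f₂ + ((-1 : ℤ) ^ j.val) • (φ f₁ * f₂))
    {n : ℕ} (f h : Fin n → A)
    (hf : ∀ i, f i ∈ 𝒜 0) (hh : ∀ i, h i ∈ 𝒜 1)
    (hone : ∑ i, f i * φ (h i) = 1) :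
    IsUnit (φ (∑ i, f i * h i)) := by
  -- g i = φ(f i) * h i, an even element with square zero
  set g : Fin n → A := fun i => φ (f i) * h i with hg
  have hφf : ∀ i, φ (f i) ∈ 𝒜 1 := fun i => by simpa using hφdeg 0 (f i) (hf i)
  have hgmem : ∀ i, g i ∈ 𝒜 0 := fun i => by
    have := SetLike.mul_mem_graded (hφf i) (hh i)
    rw [show (1 + 1 : ZMod 2) = 0 from rfl] at this
    exact this
  -- φ of the sum equals 1 - ∑ g i
  have key : φ (∑ i, f i * h i) = 1 - ∑ i, g i := by
    rw [map_sum]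
    have : ∀ i, φ (f i * h i) = f i * φ (h i) - g i := by
      intro i
      rw [hφmul (f i) 1 (h i) (hh i)]
      simp [ZMod.val_one, sub_eq_add_neg, hg]
    simp_rw [this, Finset.sum_sub_distrib, hone]
  rw [key]
  apply IsNilpotent.isUnit_one_sub
  apply Commute.isNilpotent_sum (f := g)
  · intro i _
    refine ⟨2, ?_⟩
    have hanti : h i * φ (f i) = -(φ (f i) * h i) := by
      have := hsuper 1 1 (h i) (hh i) (φ (f i)) (hφf i)
      simpa [ZMod.val_one] using this
    have : g i * g i = -(φ (f i) * φ (f i) * (h i * h i)) := by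
      rw [hg]
      simp only []
      calc φ (f i) * h i * (φ (f i) * h i)
          = φ (f i) * (h i * φ (f i)) * h i := by noncomm_ring
        _ = -(φ (f i) * φ (f i) * (h i * h i)) := by rw [hanti]; noncomm_ring
    rw [pow_two, this, hodd _ (hφf i)]
    simp
  · intro i j _ _
    have := hsuper 0 0 (g i) (hgmem i) (g j) (hgmem j)
    simpa [Commute, SemiconjBy] using this
end

section
/- Let A be a commutative superalgebra and φ : A → A an odd right superderivation with φ ∘ φ = 0, and let R = ker φ (a subring of A). If z ∈ 𝒜 1 is an odd element with φ(z) = 1, then every element a ∈ A can be written uniquely in the form a = r + s·z with r, s ∈ R; that is, A is a free R-module with basis {1, z} (a free R-supermodule of rank 2). -/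
/-- Let `A` be a commutative superalgebra and `φ : A → A` an odd right
superderivation with `φ ∘ φ = 0`, and let `R = ker φ`.  If `z` is an odd element with
`φ(z) = 1`, then every `a ∈ A` can be written uniquely as `a = r + s * z` with
`r, s ∈ R`; i.e. `A` is a free `R`-module with basis `{1, z}`. -/
theorem free_of_rank_two_over_kernel_of_superderivation
    {A : Type*} [Ring A] (𝒜 : ZMod 2 → AddSubgroup A) [GradedRing 𝒜]
    (hsuper : ∀ (i j : ZMod 2), ∀ a ∈ 𝒜 i, ∀ b ∈ 𝒜 j,
      a * b = ((-1 : ℤ) ^ ((i * j).val)) • (b * a))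
    (hodd : ∀ a ∈ 𝒜 1, a * a = 0)
    (φ : A →+ A)
    (hφdeg : ∀ i : ZMod 2, ∀ a ∈ 𝒜 i, φ a ∈ 𝒜 (i + 1))
    (hφmul : ∀ (f₁ : A) (j : ZMod 2), ∀ f₂ ∈ 𝒜 j,
      φ (f₁ * f₂) = f₁ * φ f₂ + ((-1 : ℤ) ^ j.val) • (φ f₁ * f₂))
    (hφφ : ∀ a : A, φ (φ a) = 0)
    (z : A) (hz : z ∈ 𝒜 1) (hφz : φ z = 1) :
    ∀ a : A, ∃! rs : A × A, φ rs.1 = 0 ∧ φ rs.2 = 0 ∧ a = rs.1 + rs.2 * z := by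
  have key : ∀ s : A, φ (s * z) = s - φ s * z := by
    intro s
    have := hφmul s 1 z hz
    simpa [hφz, ZMod.val_one, sub_eq_add_neg] using this
  intro a
  refine ⟨(a - φ a * z, φ a), ⟨?_, hφφ a, by rw [sub_add_cancel]⟩, ?_⟩
  · have h := key (φ a)
    simp [hφφ a] at h
    simp [map_sub, h]
  · rintro ⟨r, s⟩ ⟨hr, hs, ha⟩
    have hsz : φ (s * z) = s := by
      have := key s; simpa [hs] using this
    have hφa : φ a = s := by
      rw [ha, map_add, hr, hsz, zero_add]
    have : r = a - φ a * z := by rw [hφa, ha, add_sub_cancel_right]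
    simp [Prod.ext_iff, this, hφa]
end

section
/- Let K be a field of characteristic 0, let V be a nonzero finite-dimensional K-vector space, and let L be a finite subset of linear endomorphisms of V such that x∘y = −(y∘x) for all x, y ∈ L (in particular every x ∈ L satisfies x∘x = 0). Then there exists a nonzero vector v ∈ V with x(v) = 0 for every x ∈ L. -/
/-- Let `K` be a field of characteristic `0`, `V` a nonzero
finite-dimensional `K`-vector space, and `L` a finite set of linear endomorphisms of `V`
which pairwise anticommute (`x ∘ y = -(y ∘ x)` for all `x, y ∈ L`).  Then there is a
nonzero vector `v ∈ V` annihilated by every element of `L`. -/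
theorem exists_nonzero_common_kernel_of_anticommuting
    {K V : Type*} [Field K] [CharZero K] [AddCommGroup V] [Module K V]
    [FiniteDimensional K V] (hV : Nontrivial V)
    (L : Set (V →ₗ[K] V)) (hLfin : L.Finite)
    (hanti : ∀ x ∈ L, ∀ y ∈ L, x ∘ₗ y = -(y ∘ₗ x)) :
    ∃ v : V, v ≠ 0 ∧ ∀ x ∈ L, x v = 0 := by
  classical
  revert hanti
  refine Set.Finite.induction_on (motive := fun s _ => (∀ x ∈ s, ∀ y ∈ s, x ∘ₗ y = -(y ∘ₗ x)) →
      ∃ v : V, v ≠ 0 ∧ ∀ x ∈ s, x v = 0) L hLfin ?_ ?_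
  · intro _
    obtain ⟨v, hv⟩ := exists_ne (0 : V)
    exact ⟨v, hv, fun x hx => absurd hx (Set.notMem_empty x)⟩
  · intro a s ha hs ih hanti
    obtain ⟨v, hv, hvs⟩ := ih (fun x hx y hy =>
      hanti x (Set.mem_insert_of_mem a hx) y (Set.mem_insert_of_mem a hy))
    have haa : a ∘ₗ a = -(a ∘ₗ a) :=
      hanti a (Set.mem_insert a s) a (Set.mem_insert a s)
    have haa0 : ∀ w : V, a (a w) = 0 := by
      intro w
      have h1 : a (a w) = -(a (a w)) := by
        have := congrArg (fun f : V →ₗ[K] V => f w) haa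
        simpa using this
      have h2 : (2 : K) • a (a w) = 0 := by
        rw [two_smul]
        nth_rewrite 2 [h1]
        simp
      rcases smul_eq_zero.mp h2 with h | h
      · exact absurd h two_ne_zero
      · exact h
    by_cases hav : a v = 0
    · refine ⟨v, hv, ?_⟩
      intro x hx
      rcases hx with rfl | hx
      · exact hav
      · exact hvs x hx
    · refine ⟨a v, hav, ?_⟩
      intro x hx
      rcases hx with rfl | hx
      · exact haa0 v
      · have hxa : x ∘ₗ a = -(a ∘ₗ x) :=
          hanti x (Set.mem_insert_of_mem a hx) a (Set.mem_insert a s)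
        have := congrArg (fun f : V →ₗ[K] V => f v) hxa
        simp only [LinearMap.comp_apply, LinearMap.neg_apply] at this
        rw [this, hvs x hx, map_zero, neg_zero]
end

section
/- Let K be a field of characteristic 0, A = K[x][ε] the dual numbers over the polynomial ring K[x] (so ε² = 0), and R = {c + q·ε : c ∈ K, q ∈ K[x]} the K-subalgebra of A. Then R is not finitely generated as a K-algebra. -/
open Polynomial TrivSqZeroExt

/-- Let `K` be a field of characteristic `0`, `A = K[x][ε]` the dual
numbers over the polynomial ring, and `R = {c + q·ε : c ∈ K, q ∈ K[x]}` the
`K`-subalgebra of `A`.  Then `R` is not finitely generated as a `K`-algebra. -/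
theorem invariants_not_finitely_generated
    (K : Type*) [Field K] [CharZero K]
    (R : Subalgebra K (DualNumber (Polynomial K)))
    (hR : ∀ a : DualNumber (Polynomial K),
      a ∈ R ↔ ∃ (c : K) (q : Polynomial K), a = inl (C c) + inr q) :
    ¬ R.FG := by
  classical
  rintro ⟨s, hs⟩
  set V : Submodule K (Polynomial K) :=
    Submodule.span K (TrivSqZeroExt.snd '' (s : Set (DualNumber (Polynomial K)))) with hV
  have key : ∀ a ∈ Algebra.adjoin K (s : Set (DualNumber (Polynomial K))),
      (∃ c : K, TrivSqZeroExt.fst a = C c) ∧ TrivSqZeroExt.snd a ∈ V := by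
    intro a ha
    induction ha using Algebra.adjoin_induction with
    | mem x hx =>
      have hxR : x ∈ R := by rw [← hs]; exact Algebra.subset_adjoin hx
      obtain ⟨c, q, rfl⟩ := (hR x).mp hxR
      refine ⟨⟨c, by simp⟩, ?_⟩
      have : TrivSqZeroExt.snd (inl (C c) + inr q : DualNumber (Polynomial K)) = q := by simp
      rw [this]
      have : q ∈ TrivSqZeroExt.snd '' (s : Set (DualNumber (Polynomial K))) :=
        ⟨_, hx, by simp⟩
      exact Submodule.subset_span this
    | algebraMap r =>
      refine ⟨⟨r, ?_⟩, ?_⟩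
      · rfl
      · have : TrivSqZeroExt.snd (algebraMap K (DualNumber (Polynomial K)) r) = 0 := rfl
        rw [this]; exact V.zero_mem
    | add x y hx hy ihx ihy =>
      obtain ⟨⟨c, hc⟩, hvx⟩ := ihx
      obtain ⟨⟨d, hd⟩, hvy⟩ := ihy
      exact ⟨⟨c + d, by simp [hc, hd]⟩, by simpa using V.add_mem hvx hvy⟩
    | mul x y hx hy ihx ihy =>
      obtain ⟨⟨c, hc⟩, hvx⟩ := ihx
      obtain ⟨⟨d, hd⟩, hvy⟩ := ihy
      refine ⟨⟨c * d, by simp [hc, hd]⟩, ?_⟩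
      have : TrivSqZeroExt.snd (x * y) =
          TrivSqZeroExt.fst x • TrivSqZeroExt.snd y
          + TrivSqZeroExt.fst y • TrivSqZeroExt.snd x := by
        rw [snd_mul]
        congr 1
        simp [op_smul_eq_smul, mul_comm]
      rw [this, hc, hd]
      have h1 : (C c : Polynomial K) • TrivSqZeroExt.snd y = c • TrivSqZeroExt.snd y := by
        simp [Polynomial.smul_eq_C_mul]
      have h2 : (C d : Polynomial K) • TrivSqZeroExt.snd x = d • TrivSqZeroExt.snd x := by
        simp [Polynomial.smul_eq_C_mul]
      rw [h1, h2]
      exact V.add_mem (V.smul_mem c hvy) (V.smul_mem d hvx)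
  have htop : V = ⊤ := by
    rw [eq_top_iff]
    intro q _
    have hq : (inr q : DualNumber (Polynomial K)) ∈ R := by
      rw [hR]; exact ⟨0, q, by simp⟩
    have := (key (inr q) (by rw [hs]; exact hq)).2
    simpa using this
  have hfin : Module.Finite K (Polynomial K) := by
    refine ⟨⟨Finset.image TrivSqZeroExt.snd s, ?_⟩⟩
    rw [Finset.coe_image, ← hV, htop]
  exact Polynomial.not_finite hfin
end

section
/- Let K be a field of characteristic 0, A = K[x][ε] the dual numbers over the polynomial ring K[x] (so ε² = 0), and R = {c + q·ε : c ∈ K, q ∈ K[x]} the K-subalgebra of A. Then A is not finitely generated as an R-module. -/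
open Polynomial TrivSqZeroExt

set_option synthInstance.maxHeartbeats 1000000

/-- Let `K` be a field of characteristic `0`, `A = K[x][ε]` the dual
numbers over the polynomial ring, and `R = {c + q·ε : c ∈ K, q ∈ K[x]}` the
`K`-subalgebra of `A`.  Then `A` is not finitely generated as an `R`-module. -/
theorem dualNumbers_not_module_finite_over_invariants
    (K : Type*) [Field K] [CharZero K]
    (R : Subalgebra K (DualNumber (Polynomial K)))
    (hR : ∀ a : DualNumber (Polynomial K),
      a ∈ R ↔ ∃ (c : K) (q : Polynomial K), a = inl (C c) + inr q) :
    ¬ Module.Finite R (DualNumber (Polynomial K)) := by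
  classical
  intro hfin
  obtain ⟨s, hs⟩ := hfin.fg_top
  have main : ∀ a ∈ Submodule.span R (s : Set (DualNumber (Polynomial K))),
      fst a ∈ Submodule.span K (fst '' (s : Set (DualNumber (Polynomial K)))) := by
    intro a ha
    induction ha using Submodule.span_induction with
    | mem x hx => exact Submodule.subset_span ⟨x, hx, rfl⟩
    | zero => simp
    | add x y _ _ hx hy => simpa using Submodule.add_mem _ hx hy
    | smul r x _ hx =>
      obtain ⟨c, q, hrq⟩ := (hR r).mp r.2
      have h1 : r • x = (r : DualNumber (Polynomial K)) * x := by
        rfl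
      have h2 : fst (r • x) = c • fst x := by
        rw [h1, fst_mul, hrq]
        simp [smul_eq_C_mul]
      rw [h2]
      exact Submodule.smul_mem _ _ hx
  have key : Submodule.span K ((s.image fst : Finset (Polynomial K)) : Set (Polynomial K)) = ⊤ := by
    rw [Finset.coe_image, Submodule.eq_top_iff']
    intro p
    have := main (inl p) (hs ▸ Submodule.mem_top)
    simpa using this
  have : Module.Finite K (Polynomial K) := ⟨⟨s.image fst, key⟩⟩
  exact Polynomial.not_finite this
end

section
/- Let K be a field of characteristic 0, A = K[x][ε] the dual numbers over the polynomial ring K[x] (so ε² = 0), and R = {c + q·ε : c ∈ K, q ∈ K[x]} the K-subalgebra of A. Then the element x ∈ A is not integral over R; in particular A is not an integral extension of R. -/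
open Polynomial TrivSqZeroExt

/-- Let `K` be a field of characteristic `0`, `A = K[x][ε]` the dual
numbers over the polynomial ring, and `R = {c + q·ε : c ∈ K, q ∈ K[x]}` the
`K`-subalgebra of `A`.  Then the element `x ∈ A` is not integral over `R`; in
particular `A` is not an integral extension of `R`. -/
theorem x_not_integral_over_invariants
    (K : Type*) [Field K] [CharZero K]
    (R : Subalgebra K (DualNumber (Polynomial K)))
    (hR : ∀ a : DualNumber (Polynomial K),
      a ∈ R ↔ ∃ (c : K) (q : Polynomial K), a = inl (C c) + inr q) :
    ¬ IsIntegral R (inl (X : Polynomial K) : DualNumber (Polynomial K)) ∧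
      ¬ Algebra.IsIntegral R (DualNumber (Polynomial K)) := by
  have main : ¬ IsIntegral R (inl (X : Polynomial K) : DualNumber (Polynomial K)) := by
    rintro ⟨p, hmonic, heval⟩
    -- the first-component ring hom
    let g : DualNumber (Polynomial K) →+* Polynomial K :=
      (TrivSqZeroExt.fstHom K (Polynomial K) (Polynomial K)).toRingHom
    let F : R →+* Polynomial K := g.comp (algebraMap R (DualNumber (Polynomial K)))
    let ψ : R →+* K := (Polynomial.constantCoeff).comp F
    have hF : ∀ r : R, F r = C (ψ r) := by
      intro r
      obtain ⟨c, q, hc⟩ := (hR r).1 r.2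
      have : F r = C c := by
        show g ((r : DualNumber (Polynomial K))) = C c
        rw [hc]
        simp [g]
      rw [this]
      have h2 : ψ r = c := by
        show constantCoeff (F r) = c
        rw [this]; simp
      rw [h2]
    have h0 : eval₂ F (X : Polynomial K) p = 0 := by
      have := congrArg g heval
      rw [Polynomial.hom_eval₂] at this
      simpa [g, F] using this
    have hFC : F = C.comp ψ := by
      ext r
      simp [hF r]
    rw [hFC] at h0
    have h1 : (p.map ψ) = 0 := by
      have : eval₂ (C.comp ψ) (X : Polynomial K) p
          = eval₂ C (X : Polynomial K) (p.map ψ) := by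
        rw [eval₂_map]
      rw [this, eval₂_C_X] at h0
      exact h0
    exact (hmonic.map ψ).ne_zero h1
  refine ⟨main, fun h => main ?_⟩
  exact h.isIntegral _
end

section
/- Let A be a commutative superalgebra and let M be a ZMod 2-graded A-module, i.e. M = M₀ ⊕ M₁ with 𝒜 i • M_j ⊆ M_{i+j}. Then M is finitely presented as an (ungraded) A-module if and only if there exist n ≥ 0, a finite free graded A-module F with a homogeneous basis consisting of n even and n odd elements, and a surjective grading-preserving A-linear map ψ : F → M whose kernel is a finitely generated A-module. -/
/-- Let `A` be a commutative superalgebra and `M` a `ZMod 2`-graded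
`A`-module (`M = M₀ ⊕ M₁` with `𝒜 i • ℳ j ⊆ ℳ (i+j)`).  Then `M` is finitely presented
as an (ungraded) `A`-module iff there are `n : ℕ`, a finite free graded `A`-module
`F = A^{n|n}` (with standard homogeneous basis of `n` even and `n` odd elements, the
graded piece `F_j` consisting of vectors whose even coordinates lie in `𝒜 j` and odd
coordinates in `𝒜 (j+1)`), and a surjective grading-preserving `A`-linear map
`ψ : F → M` whose kernel is finitely generated. -/
theorem supermodule_finitePresentation_iff
    {A M : Type*} [Ring A] [AddCommGroup M] [Module A M]
    (𝒜 : ZMod 2 → AddSubgroup A) [GradedRing 𝒜]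
    (hsuper : ∀ (i j : ZMod 2), ∀ a ∈ 𝒜 i, ∀ b ∈ 𝒜 j,
      a * b = ((-1 : ℤ) ^ ((i * j).val)) • (b * a))
    (hodd : ∀ a ∈ 𝒜 1, a * a = 0)
    (ℳ : ZMod 2 → AddSubgroup M)
    (hdecomp : DirectSum.IsInternal ℳ)
    (hsmul : ∀ (i j : ZMod 2), ∀ a ∈ 𝒜 i, ∀ m ∈ ℳ j, a • m ∈ ℳ (i + j)) :
    Module.FinitePresentation A M ↔
      ∃ (n : ℕ) (ψ : ((Fin n ⊕ Fin n) → A) →ₗ[A] M),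
        Function.Surjective ψ ∧
        (LinearMap.ker ψ).FG ∧
        (∀ j : ZMod 2, ∀ v : (Fin n ⊕ Fin n) → A,
          (∀ i : Fin n, v (Sum.inl i) ∈ 𝒜 j) →
          (∀ i : Fin n, v (Sum.inr i) ∈ 𝒜 (j + 1)) →
          ψ v ∈ ℳ j) := by
  classical
  constructor
  · intro hfp
    letI := hfp
    -- every element decomposes into an even and an odd part
    have hdec : ∀ m : M, ∃ a ∈ ℳ 0, ∃ b ∈ ℳ 1, m = a + b := by
      intro m
      obtain ⟨x, hx⟩ := hdecomp.surjective m
      refine ⟨x 0, (x 0).2, x 1, (x 1).2, ?_⟩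
      rw [← hx]
      conv_lhs => rw [← DirectSum.sum_univ_of x]
      rw [map_sum]
      have huniv : (Finset.univ : Finset (ZMod 2)) = {0, 1} := by decide
      rw [huniv, Finset.sum_insert (by decide), Finset.sum_singleton,
        DirectSum.coeAddMonoidHom_of, DirectSum.coeAddMonoidHom_of]
    obtain ⟨n, s, hs⟩ := Module.Finite.exists_fin (R := A) (M := M)
    choose e he o ho hseo using fun i => hdec (s i)
    set ψ : ((Fin n ⊕ Fin n) → A) →ₗ[A] M :=
      Fintype.linearCombination A (Sum.elim e o) with hψ
    have hsurj : Function.Surjective ψ := by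
      rw [← LinearMap.range_eq_top, hψ, Fintype.range_linearCombination, ← top_le_iff, ← hs,
        Submodule.span_le]
      rintro _ ⟨i, rfl⟩
      rw [hseo i]
      exact add_mem
        (Submodule.subset_span ⟨Sum.inl i, rfl⟩)
        (Submodule.subset_span ⟨Sum.inr i, rfl⟩)
    refine ⟨n, ψ, hsurj, Module.FinitePresentation.fg_ker ψ hsurj, ?_⟩
    intro j v hvl hvr
    rw [hψ, Fintype.linearCombination_apply, Fintype.sum_sum_type]
    refine AddSubgroup.add_mem _ (AddSubgroup.sum_mem _ fun i _ => ?_)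
      (AddSubgroup.sum_mem _ fun i _ => ?_)
    · have := hsmul j 0 _ (hvl i) _ (he i)
      rwa [add_zero] at this
    · have h11 : (1 : ZMod 2) + 1 = 0 := by decide
      have hj : j + 1 + 1 = j := by rw [add_assoc, h11, add_zero]
      have := hsmul (j + 1) 1 _ (hvr i) _ (ho i)
      rwa [hj] at this
  · rintro ⟨n, ψ, hsurj, hker, -⟩
    exact Module.finitePresentation_of_surjective ψ hsurj hker
end
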